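/- Let (G, B) be a biased graph and u a balancing vertex (i.e., G − u with the induced bias is balanced). For any two links e_i, e_j incident to u, either all cycles of G containing both e_i and e_j are balanced, or all such cycles are unbalanced. -/

import Mathlib

open Set

/-! ### Matroid core -/

namespace Matroid

variable {α : Type*}

/-- A circuit: a minimal dependent set. -/
def Circuit' (M : Matroid α) (C : Set α) : Prop :=
  M.Dep C ∧ ∀ D, D ⊂ C → M.Indep D

/-- A matroid is connected if its ground set is nonempty and every two distinct
elements lie in a common circuit. -/
def Connected' (M : Matroid α) : Prop :=
  M.E.Nonempty ∧ ∀ e ∈ M.E, ∀ f ∈ M.E, e ≠ f → ∃ C, M.Circuit' C ∧ e ∈ C ∧ f ∈ C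

/-- Deletion of a set of elements. -/
def del (M : Matroid α) (D : Set α) : Matroid α := M ↾ (M.E \ D)

/-- Contraction of a set of elements. -/
def con (M : Matroid α) (C : Set α) : Matroid α := (M✶.del C)✶

/-- `N` is a minor of `M`. -/
def IsMinor' (N M : Matroid α) : Prop :=
  ∃ C D : Set α, Disjoint C D ∧ C ⊆ M.E ∧ D ⊆ M.E ∧ N = (M.con C).del D

def IsStrictMinor' (N M : Matroid α) : Prop := N.IsMinor' M ∧ N ≠ M

/-- The rank (as an extended natural number) of a set in a matroid. -/
noncomputable def eRk' (M : Matroid α) (X : Set α) : ℕ∞ :=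
  ⨆ I : {I : Set α // M.Indep I ∧ I ⊆ X}, I.1.encard

/-- A cocircuit is a circuit of the dual matroid. -/
def Cocircuit' (M : Matroid α) (K : Set α) : Prop := M✶.Circuit' K

/-- A loop is a one-element circuit. -/
def IsLoopElem (M : Matroid α) (e : α) : Prop := M.Circuit' {e}

end Matroid

/-! ### Biased graph core -/

universe u v

/-- A multigraph, given by assigning two (possibly equal) endpoints to each edge. -/
structure MultiGraph (V : Type u) (E : Type v) where
  fst : E → V
  snd : E → V

namespace MultiGraph

variable {V : Type u} {E : Type v} (G : MultiGraph V E)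

/-- Vertex `v` is incident with edge `e`. -/
def Inc (v : V) (e : E) : Prop := G.fst e = v ∨ G.snd e = v

/-- `e` is a loop. -/
def IsLoopEdge (e : E) : Prop := G.fst e = G.snd e

/-- `e` is a link (an edge with two distinct endpoints). -/
def IsLink (e : E) : Prop := G.fst e ≠ G.snd e

/-- The set of vertices incident with an edge in `X`. -/
def VSet (X : Set E) : Set V := {v | ∃ e ∈ X, G.Inc v e}

/-- The degree of `v` in the edge set `X` (loops count twice). -/
noncomputable def deg (X : Set E) (v : V) : ℕ :=
  {e | e ∈ X ∧ G.fst e = v}.ncard + {e | e ∈ X ∧ G.snd e = v}.ncard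

/-- Two edges of `X` are adjacent if they share a vertex. -/
def EdgeAdj (X : Set E) (e f : E) : Prop := e ∈ X ∧ f ∈ X ∧ ∃ v, G.Inc v e ∧ G.Inc v f

/-- The subgraph induced by the edge set `X` is connected. -/
def ConnectedOn (X : Set E) : Prop :=
  ∀ ⦃e f⦄, e ∈ X → f ∈ X → Relation.ReflTransGen (G.EdgeAdj X) e f

/-- An edge set is a cycle if it is finite, nonempty, connected and every
incident vertex has degree exactly two. -/
def IsCycle (C : Set E) : Prop :=
  C.Finite ∧ C.Nonempty ∧ G.ConnectedOn C ∧ ∀ v ∈ G.VSet C, G.deg C v = 2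

/-- The ends of an edge set: its vertices of degree one. -/
def Ends (P : Set E) : Set V := {v | v ∈ G.VSet P ∧ G.deg P v = 1}

/-- An edge set is a path if it is finite, nonempty, connected, has maximum degree
two and exactly two vertices of degree one. -/
def IsPath (P : Set E) : Prop :=
  P.Finite ∧ P.Nonempty ∧ G.ConnectedOn P ∧ (∀ v ∈ G.VSet P, G.deg P v ≤ 2) ∧
    (G.Ends P).ncard = 2

/-- `C` is (the edge set of) a connected component of the subgraph induced by `X`. -/
def IsComponentOf (C X : Set E) : Prop :=
  ∃ e ∈ X, C = {f | f ∈ X ∧ Relation.ReflTransGen (G.EdgeAdj X) e f}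

end MultiGraph

/-- A biased graph: a multigraph with a distinguished collection of "balanced" edge sets. -/
structure BiasedGraph (V : Type u) (E : Type v) extends MultiGraph V E where
  Balanced : Set (Set E)

namespace BiasedGraph

variable {V : Type u} {E : Type v} (Ω : BiasedGraph V E)

/-- The theta property: every balanced set is a cycle, and no theta subgraph
(a union of two cycles whose symmetric difference is a cycle) contains
exactly two balanced cycles. -/
def ThetaProperty : Prop :=
  (∀ C ∈ Ω.Balanced, Ω.toMultiGraph.IsCycle C) ∧
  ∀ C₁ C₂ C₃ : Set E, Ω.toMultiGraph.IsCycle C₁ → Ω.toMultiGraph.IsCycle C₂ →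
    Ω.toMultiGraph.IsCycle C₃ → C₃ = symmDiff C₁ C₂ →
    C₁ ∈ Ω.Balanced → C₂ ∈ Ω.Balanced → C₃ ∈ Ω.Balanced

def IsBalancedCycle (C : Set E) : Prop := Ω.toMultiGraph.IsCycle C ∧ C ∈ Ω.Balanced

def IsUnbalancedCycle (C : Set E) : Prop := Ω.toMultiGraph.IsCycle C ∧ C ∉ Ω.Balanced

/-- The subgraph induced by `X` is balanced: every cycle inside it is balanced. -/
def BalancedOn (X : Set E) : Prop :=
  ∀ C ⊆ X, Ω.toMultiGraph.IsCycle C → C ∈ Ω.Balanced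

/-- A contrabalanced theta subgraph: all three of its cycles are unbalanced. -/
def IsContraTheta (T : Set E) : Prop :=
  ∃ C₁ C₂ C₃ : Set E, Ω.IsUnbalancedCycle C₁ ∧ Ω.IsUnbalancedCycle C₂ ∧
    Ω.IsUnbalancedCycle C₃ ∧ C₃ = symmDiff C₁ C₂ ∧ T = C₁ ∪ C₂

/-- Tight handcuffs: two edge-disjoint unbalanced cycles meeting in exactly one vertex. -/
def IsTightHandcuff (H : Set E) : Prop :=
  ∃ C₁ C₂ : Set E, Ω.IsUnbalancedCycle C₁ ∧ Ω.IsUnbalancedCycle C₂ ∧ Disjoint C₁ C₂ ∧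
    (∃ v, Ω.toMultiGraph.VSet C₁ ∩ Ω.toMultiGraph.VSet C₂ = {v}) ∧ H = C₁ ∪ C₂

/-- Loose handcuffs: two vertex-disjoint unbalanced cycles joined by a path meeting
them only in its two ends. -/
def IsLooseHandcuff (H : Set E) : Prop :=
  ∃ C₁ C₂ P : Set E, Ω.IsUnbalancedCycle C₁ ∧ Ω.IsUnbalancedCycle C₂ ∧
    Disjoint (Ω.toMultiGraph.VSet C₁) (Ω.toMultiGraph.VSet C₂) ∧
    Ω.toMultiGraph.IsPath P ∧ Disjoint P (C₁ ∪ C₂) ∧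
    (∃ a b, a ≠ b ∧ Ω.toMultiGraph.Ends P = {a, b} ∧
      Ω.toMultiGraph.VSet P ∩ Ω.toMultiGraph.VSet C₁ = {a} ∧
      Ω.toMultiGraph.VSet P ∩ Ω.toMultiGraph.VSet C₂ = {b}) ∧
    H = C₁ ∪ C₂ ∪ P

/-- The circuits of the frame matroid of a biased graph. -/
def FrameCircuit (X : Set E) : Prop :=
  Ω.IsBalancedCycle X ∨ Ω.IsContraTheta X ∨ Ω.IsTightHandcuff X ∨ Ω.IsLooseHandcuff X

end BiasedGraph

/-- A biased graph (on the ground set of `M`) represents the matroid `M`: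
it satisfies the theta property and the circuits of `M` are exactly its frame circuits. -/
def BiasedGraph.Represents {V : Type u} {α : Type v} (M : Matroid α)
    (Ω : BiasedGraph V ↥M.E) : Prop :=
  Ω.ThetaProperty ∧ ∀ X : Set ↥M.E, M.Circuit' (Subtype.val '' X) ↔ Ω.FrameCircuit X

/-- A matroid is frame if some biased graph represents it. -/
def Matroid.IsFrame {α : Type v} (M : Matroid α) : Prop :=
  ∃ (V : Type v) (Ω : BiasedGraph V ↥M.E), BiasedGraph.Represents M Ω

/-- A matroidal `(M, L)` is frame if some biased graph representing `M` has all
elements of `L` as unbalanced loops. -/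
def Matroid.IsFrameMatroidal {α : Type v} (M : Matroid α) (L : Set α) : Prop :=
  ∃ (V : Type v) (Ω : BiasedGraph V ↥M.E), BiasedGraph.Represents M Ω ∧
    ∀ e : ↥M.E, e.1 ∈ L → Ω.toMultiGraph.IsLoopEdge e ∧ {e} ∉ Ω.Balanced

/-! ### Auxiliary graph lemmas -/

namespace MultiGraph

variable {V : Type u} {E : Type v} (G : MultiGraph V E)

/-- fst-slots of `X` at `v`. -/
def sA (X : Set E) (v : V) : Set E := {e | e ∈ X ∧ G.fst e = v}
/-- snd-slots of `X` at `v`. -/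
def sB (X : Set E) (v : V) : Set E := {e | e ∈ X ∧ G.snd e = v}

variable {G}

lemma mem_sA {X : Set E} {v : V} {e : E} : e ∈ G.sA X v ↔ e ∈ X ∧ G.fst e = v := Iff.rfl
lemma mem_sB {X : Set E} {v : V} {e : E} : e ∈ G.sB X v ↔ e ∈ X ∧ G.snd e = v := Iff.rfl

lemma sA_subset {X : Set E} {v : V} : G.sA X v ⊆ X := fun _ h => h.1
lemma sB_subset {X : Set E} {v : V} : G.sB X v ⊆ X := fun _ h => h.1

lemma deg_def (X : Set E) (v : V) : G.deg X v = (G.sA X v).ncard + (G.sB X v).ncard := rfl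

lemma inc_iff_mem_slots {X : Set E} {v : V} {e : E} (he : e ∈ X) :
    G.Inc v e ↔ e ∈ G.sA X v ∪ G.sB X v := by
  constructor
  · rintro (h | h)
    · exact Or.inl ⟨he, h⟩
    · exact Or.inr ⟨he, h⟩
  · rintro (h | h)
    · exact Or.inl h.2
    · exact Or.inr h.2

lemma mem_VSet_iff {X : Set E} {v : V} : v ∈ G.VSet X ↔ ∃ e ∈ X, G.Inc v e := Iff.rfl

lemma VSet_mono {X Y : Set E} (h : X ⊆ Y) : G.VSet X ⊆ G.VSet Y := by
  rintro v ⟨e, he, hi⟩; exact ⟨e, h he, hi⟩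

lemma VSet_union {X Y : Set E} : G.VSet (X ∪ Y) = G.VSet X ∪ G.VSet Y := by
  ext v
  constructor
  · rintro ⟨e, (he | he), hi⟩
    · exact Or.inl ⟨e, he, hi⟩
    · exact Or.inr ⟨e, he, hi⟩
  · rintro (⟨e, he, hi⟩ | ⟨e, he, hi⟩)
    · exact ⟨e, Or.inl he, hi⟩
    · exact ⟨e, Or.inr he, hi⟩

lemma deg_eq_zero_of_not_mem_VSet {X : Set E} {v : V} (h : v ∉ G.VSet X) :
    G.deg X v = 0 := by
  have hA : G.sA X v = ∅ := by
    ext e; simp only [mem_sA, Set.mem_empty_iff_false, iff_false]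
    rintro ⟨he, hf⟩; exact h ⟨e, he, Or.inl hf⟩
  have hB : G.sB X v = ∅ := by
    ext e; simp only [mem_sB, Set.mem_empty_iff_false, iff_false]
    rintro ⟨he, hf⟩; exact h ⟨e, he, Or.inr hf⟩
  rw [deg_def, hA, hB]; simp

lemma deg_pos {X : Set E} {v : V} (hX : X.Finite) (h : v ∈ G.VSet X) :
    1 ≤ G.deg X v := by
  obtain ⟨e, he, hi⟩ := h
  rcases hi with hf | hf
  · have : 1 ≤ (G.sA X v).ncard := by
      have : (G.sA X v).Nonempty := ⟨e, he, hf⟩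
      have := (Set.ncard_pos (hX.subset sA_subset)).2 this
      omega
    rw [deg_def]; omega
  · have : 1 ≤ (G.sB X v).ncard := by
      have : (G.sB X v).Nonempty := ⟨e, he, hf⟩
      have := (Set.ncard_pos (hX.subset sB_subset)).2 this
      omega
    rw [deg_def]; omega

lemma mem_VSet_of_deg_ne_zero {X : Set E} {v : V} (h : G.deg X v ≠ 0) :
    v ∈ G.VSet X := by
  by_contra hv
  exact h (deg_eq_zero_of_not_mem_VSet hv)

lemma deg_mono {X Y : Set E} {v : V} (hXY : X ⊆ Y) (hY : Y.Finite) :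
    G.deg X v ≤ G.deg Y v := by
  have hA : (G.sA X v).ncard ≤ (G.sA Y v).ncard :=
    Set.ncard_le_ncard (fun e he => ⟨hXY he.1, he.2⟩) (hY.subset sA_subset)
  have hB : (G.sB X v).ncard ≤ (G.sB Y v).ncard :=
    Set.ncard_le_ncard (fun e he => ⟨hXY he.1, he.2⟩) (hY.subset sB_subset)
  rw [deg_def, deg_def]; omega

lemma deg_union {X Y : Set E} {v : V} (hd : Disjoint X Y) (hX : X.Finite) (hY : Y.Finite) :
    G.deg (X ∪ Y) v = G.deg X v + G.deg Y v := by
  have hA : G.sA (X ∪ Y) v = G.sA X v ∪ G.sA Y v := by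
    ext e; simp only [mem_sA, Set.mem_union]; tauto
  have hB : G.sB (X ∪ Y) v = G.sB X v ∪ G.sB Y v := by
    ext e; simp only [mem_sB, Set.mem_union]; tauto
  have hdA : Disjoint (G.sA X v) (G.sA Y v) :=
    hd.mono sA_subset sA_subset
  have hdB : Disjoint (G.sB X v) (G.sB Y v) :=
    hd.mono sB_subset sB_subset
  rw [deg_def, deg_def, deg_def, hA, hB,
    Set.ncard_union_eq hdA (hX.subset sA_subset) (hY.subset sA_subset),
    Set.ncard_union_eq hdB (hX.subset sB_subset) (hY.subset sB_subset)]
  omega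

/-- If `X ⊆ Y` have the same (finite) degree at `v`, every `Y`-edge at `v` is in `X`. -/
lemma mem_of_deg_eq {X Y : Set E} {v : V} (hXY : X ⊆ Y) (hY : Y.Finite)
    (hdeg : G.deg Y v ≤ G.deg X v) {g : E} (hg : g ∈ Y) (hi : G.Inc v g) : g ∈ X := by
  have hA : (G.sA X v).ncard ≤ (G.sA Y v).ncard :=
    Set.ncard_le_ncard (fun e he => ⟨hXY he.1, he.2⟩) (hY.subset sA_subset)
  have hB : (G.sB X v).ncard ≤ (G.sB Y v).ncard :=
    Set.ncard_le_ncard (fun e he => ⟨hXY he.1, he.2⟩) (hY.subset sB_subset)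
  rw [deg_def, deg_def] at hdeg
  have hAe : (G.sA Y v).ncard ≤ (G.sA X v).ncard := by omega
  have hBe : (G.sB Y v).ncard ≤ (G.sB X v).ncard := by omega
  have hAq : G.sA X v = G.sA Y v :=
    Set.eq_of_subset_of_ncard_le (fun e he => ⟨hXY he.1, he.2⟩) hAe (hY.subset sA_subset)
  have hBq : G.sB X v = G.sB Y v :=
    Set.eq_of_subset_of_ncard_le (fun e he => ⟨hXY he.1, he.2⟩) hBe (hY.subset sB_subset)
  rcases (inc_iff_mem_slots hg).1 hi with h | h
  · exact sA_subset (hAq ▸ h)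
  · exact sB_subset (hBq ▸ h)

lemma deg_remove_not_inc {X : Set E} {g : E} {v : V} (h : ¬ G.Inc v g) :
    G.deg (X \ {g}) v = G.deg X v := by
  have hA : G.sA (X \ {g}) v = G.sA X v := by
    ext e
    simp only [mem_sA, Set.mem_diff, Set.mem_singleton_iff]
    constructor
    · rintro ⟨⟨he, _⟩, hf⟩; exact ⟨he, hf⟩
    · rintro ⟨he, hf⟩
      refine ⟨⟨he, ?_⟩, hf⟩
      rintro rfl; exact h (Or.inl hf)
  have hB : G.sB (X \ {g}) v = G.sB X v := by
    ext e
    simp only [mem_sB, Set.mem_diff, Set.mem_singleton_iff]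
    constructor
    · rintro ⟨⟨he, _⟩, hf⟩; exact ⟨he, hf⟩
    · rintro ⟨he, hf⟩
      refine ⟨⟨he, ?_⟩, hf⟩
      rintro rfl; exact h (Or.inr hf)
  rw [deg_def, deg_def, hA, hB]

lemma deg_remove_inc {X : Set E} {g : E} {v : V} (hX : X.Finite) (hg : g ∈ X)
    (hi : G.Inc v g) (hl : ¬ G.IsLoopEdge g) :
    G.deg (X \ {g}) v + 1 = G.deg X v := by
  have hsubA : G.sA (X \ {g}) v = G.sA X v \ {g} := by
    ext e; simp only [mem_sA, Set.mem_diff, Set.mem_singleton_iff]; tauto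
  have hsubB : G.sB (X \ {g}) v = G.sB X v \ {g} := by
    ext e; simp only [mem_sB, Set.mem_diff, Set.mem_singleton_iff]; tauto
  rcases hi with hf | hf
  · have hgA : g ∈ G.sA X v := ⟨hg, hf⟩
    have hgB : g ∉ G.sB X v := by
      rintro ⟨_, hs⟩; exact hl (hf.trans hs.symm)
    have h1 : (G.sA X v \ {g}).ncard + 1 = (G.sA X v).ncard := by
      rw [Set.ncard_diff_singleton_add_one hgA (hX.subset sA_subset)]
    have h2 : G.sB X v \ {g} = G.sB X v := by
      ext e; simp only [Set.mem_diff, Set.mem_singleton_iff]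
      constructor
      · exact fun h => h.1
      · intro h; exact ⟨h, by rintro rfl; exact hgB h⟩
    rw [deg_def, deg_def, hsubA, hsubB, h2]; omega
  · have hgB : g ∈ G.sB X v := ⟨hg, hf⟩
    have hgA : g ∉ G.sA X v := by
      rintro ⟨_, hs⟩; exact hl (hs.trans hf.symm)
    have h1 : (G.sB X v \ {g}).ncard + 1 = (G.sB X v).ncard := by
      rw [Set.ncard_diff_singleton_add_one hgB (hX.subset sB_subset)]
    have h2 : G.sA X v \ {g} = G.sA X v := by
      ext e; simp only [Set.mem_diff, Set.mem_singleton_iff]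
      constructor
      · exact fun h => h.1
      · intro h; exact ⟨h, by rintro rfl; exact hgA h⟩
    rw [deg_def, deg_def, hsubA, hsubB, h2]; omega

/-- A vertex of degree 1 has a unique incident edge. -/
lemma deg_one_unique {X : Set E} {v : V} (hX : X.Finite) (h : G.deg X v = 1) :
    ∃ g ∈ X, G.Inc v g ∧ ∀ x ∈ X, G.Inc v x → x = g := by
  rw [deg_def] at h
  rcases Nat.add_eq_one_iff.1 h with ⟨hA, hB⟩ | ⟨hA, hB⟩
  · have hAe : G.sA X v = ∅ := (Set.ncard_eq_zero (hX.subset sA_subset)).1 hA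
    obtain ⟨g, hg⟩ := Set.ncard_eq_one.1 hB
    have hgm : g ∈ G.sB X v := by rw [hg]; rfl
    refine ⟨g, hgm.1, Or.inr hgm.2, ?_⟩
    intro x hx hi
    rcases (inc_iff_mem_slots hx).1 hi with hm | hm
    · rw [hAe] at hm; exact absurd hm (Set.notMem_empty x)
    · rw [hg] at hm; exact hm
  · have hBe : G.sB X v = ∅ := (Set.ncard_eq_zero (hX.subset sB_subset)).1 hB
    obtain ⟨g, hg⟩ := Set.ncard_eq_one.1 hA
    have hgm : g ∈ G.sA X v := by rw [hg]; rfl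
    refine ⟨g, hgm.1, Or.inl hgm.2, ?_⟩
    intro x hx hi
    rcases (inc_iff_mem_slots hx).1 hi with hm | hm
    · rw [hg] at hm; exact hm
    · rw [hBe] at hm; exact absurd hm (Set.notMem_empty x)



lemma EdgeAdj.symm {X : Set E} {e f : E} (h : G.EdgeAdj X e f) : G.EdgeAdj X f e := by
  obtain ⟨he, hf, v, hv1, hv2⟩ := h
  exact ⟨hf, he, v, hv2, hv1⟩

lemma EdgeAdj.mono {X Y : Set E} {e f : E} (h : G.EdgeAdj X e f) (he : e ∈ Y) (hf : f ∈ Y) :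
    G.EdgeAdj Y e f := by
  obtain ⟨_, _, v, hv1, hv2⟩ := h
  exact ⟨he, hf, v, hv1, hv2⟩

lemma rtg_symm {X : Set E} {e f : E}
    (h : Relation.ReflTransGen (G.EdgeAdj X) e f) :
    Relation.ReflTransGen (G.EdgeAdj X) f e := by
  induction h with
  | refl => exact Relation.ReflTransGen.refl
  | tail _ hadj ih => exact Relation.ReflTransGen.head hadj.symm ih

/-- Connected component of `g₀` in the subgraph induced by `X`. -/
def comp (G : MultiGraph V E) (X : Set E) (g₀ : E) : Set E :=
  {h | h ∈ X ∧ Relation.ReflTransGen (G.EdgeAdj X) g₀ h}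

lemma comp_subset {X : Set E} {g₀ : E} : G.comp X g₀ ⊆ X := fun _ h => h.1

lemma mem_comp_self {X : Set E} {g₀ : E} (h : g₀ ∈ X) : g₀ ∈ G.comp X g₀ :=
  ⟨h, Relation.ReflTransGen.refl⟩

lemma comp_closed {X : Set E} {g₀ h h' : E} (hh : h ∈ G.comp X g₀)
    (hadj : G.EdgeAdj X h h') : h' ∈ G.comp X g₀ :=
  ⟨hadj.2.1, hh.2.tail hadj⟩

lemma rtg_comp {X : Set E} {g₀ h : E} (hg₀ : g₀ ∈ X)
    (hr : Relation.ReflTransGen (G.EdgeAdj X) g₀ h) :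
    Relation.ReflTransGen (G.EdgeAdj (G.comp X g₀)) g₀ h := by
  induction hr with
  | refl => exact Relation.ReflTransGen.refl
  | @tail b c hb hadj ih =>
      have hbc : b ∈ G.comp X g₀ := ⟨hadj.1, hb⟩
      have hcc : c ∈ G.comp X g₀ := comp_closed hbc hadj
      exact ih.tail (hadj.mono hbc hcc)

lemma comp_connected {X : Set E} {g₀ : E} (hg₀ : g₀ ∈ X) :
    G.ConnectedOn (G.comp X g₀) := by
  intro h₁ h₂ hh₁ hh₂
  exact (rtg_symm (rtg_comp hg₀ hh₁.2)).trans (rtg_comp hg₀ hh₂.2)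

/-- Every `X`-edge at a vertex of the component belongs to the component. -/
lemma comp_vertex_closed {X : Set E} {g₀ h x : E} {w : V} (hh : h ∈ G.comp X g₀)
    (hw : G.Inc w h) (hx : x ∈ X) (hxw : G.Inc w x) : x ∈ G.comp X g₀ :=
  comp_closed hh ⟨hh.1, hx, w, hw, hxw⟩

lemma comp_deg {X : Set E} {g₀ : E} {v : V} (hv : v ∈ G.VSet (G.comp X g₀)) :
    G.deg (G.comp X g₀) v = G.deg X v := by
  obtain ⟨h, hh, hinc⟩ := hv
  have hA : G.sA (G.comp X g₀) v = G.sA X v := by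
    ext x
    refine ⟨fun hx => ⟨comp_subset hx.1, hx.2⟩, fun hx => ⟨?_, hx.2⟩⟩
    exact comp_vertex_closed hh hinc hx.1 (Or.inl hx.2)
  have hB : G.sB (G.comp X g₀) v = G.sB X v := by
    ext x
    refine ⟨fun hx => ⟨comp_subset hx.1, hx.2⟩, fun hx => ⟨?_, hx.2⟩⟩
    exact comp_vertex_closed hh hinc hx.1 (Or.inr hx.2)
  rw [deg_def, deg_def, hA, hB]

/-- In a connected edge set with at least two edges, every edge has a distinct neighbour. -/
lemma exists_adj_ne {X : Set E} (hX : G.ConnectedOn X) {g h : E} (hg : g ∈ X) (hh : h ∈ X)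
    (hne : h ≠ g) : ∃ x ∈ X, x ≠ g ∧ G.EdgeAdj X g x := by
  suffices H : ∀ y, Relation.ReflTransGen (G.EdgeAdj X) g y → y ≠ g →
      ∃ x ∈ X, x ≠ g ∧ G.EdgeAdj X g x by exact H h (hX hg hh) hne
  intro y hy
  induction hy with
  | refl => intro hc; exact absurd rfl hc
  | @tail b c hb hadj ih =>
      intro hcg
      by_cases hbg : b = g
      · subst hbg; exact ⟨c, hadj.2.1, hcg, hadj⟩
      · exact ih hbg
/-- Removing an edge attached to the rest only through `w` preserves connectivity. -/
lemma excision {S : Set E} {g : E} {w : V} (hconn : G.ConnectedOn S) (hg : g ∈ S)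
    (hkey : ∀ x ∈ S, x ≠ g → G.EdgeAdj S g x → G.Inc w x)
    (hne : ∃ x ∈ S, x ≠ g) :
    G.ConnectedOn (S \ {g}) ∧ w ∈ G.VSet (S \ {g}) := by
  classical
  obtain ⟨h₀, hh₀, hh₀g⟩ := hne
  obtain ⟨x₀, hx₀S, hx₀g, hadj₀⟩ := exists_adj_ne hconn hg hh₀ hh₀g
  have hx₀w : G.Inc w x₀ := hkey x₀ hx₀S hx₀g hadj₀
  have hx₀' : x₀ ∈ S \ {g} := ⟨hx₀S, hx₀g⟩
  refine ⟨?_, ⟨x₀, hx₀', hx₀w⟩⟩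
  set r : E → E := fun y => if y = g then x₀ else y with hr
  have step : ∀ y z, G.EdgeAdj S y z →
      Relation.ReflTransGen (G.EdgeAdj (S \ {g})) (r y) (r z) := by
    intro y z hyz
    by_cases hy : y = g <;> by_cases hz : z = g
    · simp only [hr, if_pos hy, if_pos hz]
      exact Relation.ReflTransGen.refl
    · have hzw : G.Inc w z := hkey z hyz.2.1 hz (hy ▸ hyz)
      have hstep : G.EdgeAdj (S \ {g}) x₀ z := ⟨hx₀', ⟨hyz.2.1, hz⟩, w, hx₀w, hzw⟩
      simp only [hr, if_pos hy, if_neg hz]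
      exact Relation.ReflTransGen.single hstep
    · have hyw : G.Inc w y := hkey y hyz.1 hy (hz ▸ hyz.symm)
      have hstep : G.EdgeAdj (S \ {g}) y x₀ := ⟨⟨hyz.1, hy⟩, hx₀', w, hyw, hx₀w⟩
      simp only [hr, if_pos hz, if_neg hy]
      exact Relation.ReflTransGen.single hstep
    · simp only [hr, if_neg hy, if_neg hz]
      exact Relation.ReflTransGen.single (hyz.mono ⟨hyz.1, hy⟩ ⟨hyz.2.1, hz⟩)
  intro h₁ h₂ hh₁ hh₂
  have hrw : ∀ y z, Relation.ReflTransGen (G.EdgeAdj S) y z →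
      Relation.ReflTransGen (G.EdgeAdj (S \ {g})) (r y) (r z) := by
    intro y z hyz
    induction hyz with
    | refl => exact Relation.ReflTransGen.refl
    | tail _ hadj ih => exact ih.trans (step _ _ hadj)
  have := hrw h₁ h₂ (hconn hh₁.1 hh₂.1)
  have h1ne : h₁ ≠ g := by simpa using hh₁.2
  have h2ne : h₂ ≠ g := by simpa using hh₂.2
  simpa only [hr, if_neg h1ne, if_neg h2ne] using this

/-- A loop in a connected subgraph of max degree 2 is the whole subgraph. -/
lemma loop_component {X : Set E} {ℓ : E} (hfin : X.Finite)
    (hdeg : ∀ v ∈ G.VSet X, G.deg X v ≤ 2) (hconn : G.ConnectedOn X)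
    (hℓ : ℓ ∈ X) (hloop : G.IsLoopEdge ℓ) : X = {ℓ} := by
  set w := G.fst ℓ with hw
  have hℓA : ℓ ∈ G.sA X w := ⟨hℓ, rfl⟩
  have hℓB : ℓ ∈ G.sB X w := ⟨hℓ, hloop.symm⟩
  have hwV : w ∈ G.VSet X := ⟨ℓ, hℓ, Or.inl rfl⟩
  have hd2 := hdeg w hwV
  refine Set.eq_singleton_iff_unique_mem.2 ⟨hℓ, ?_⟩
  intro x hx
  by_contra hxℓ
  obtain ⟨y, hyX, hyℓ, hadj⟩ := exists_adj_ne hconn hℓ hx hxℓ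
  obtain ⟨_, _, z, hz1, hz2⟩ := hadj
  have hzw : z = w := by
    rcases hz1 with h | h
    · exact h.symm ▸ rfl
    · rw [← h, ← hloop]
  subst hzw
  have h2 : 3 ≤ (G.sA X w).ncard + (G.sB X w).ncard := by
    rcases hz2 with h | h
    · have hsub : {ℓ, y} ⊆ G.sA X w := by
        intro t ht; rcases ht with rfl | rfl
        · exact hℓA
        · exact ⟨hyX, h⟩
      have h2' : 2 ≤ (G.sA X w).ncard := by
        have := Set.ncard_le_ncard hsub (hfin.subset sA_subset)
        rwa [Set.ncard_pair (Ne.symm hyℓ)] at this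
      have h1' : 1 ≤ (G.sB X w).ncard := by
        have : (G.sB X w).Nonempty := ⟨ℓ, hℓB⟩
        have := (Set.ncard_pos (hfin.subset sB_subset)).2 this
        omega
      omega
    · have hsub : {ℓ, y} ⊆ G.sB X w := by
        intro t ht; rcases ht with rfl | rfl
        · exact hℓB
        · exact ⟨hyX, h⟩
      have h2' : 2 ≤ (G.sB X w).ncard := by
        have := Set.ncard_le_ncard hsub (hfin.subset sB_subset)
        rwa [Set.ncard_pair (Ne.symm hyℓ)] at this
      have h1' : 1 ≤ (G.sA X w).ncard := by
        have : (G.sA X w).Nonempty := ⟨ℓ, hℓA⟩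
        have := (Set.ncard_pos (hfin.subset sA_subset)).2 this
        omega
      omega
  rw [deg_def] at hd2
  omega

lemma cycle_loop_eq {C : Set E} {ℓ : E} (hC : G.IsCycle C) (hℓ : ℓ ∈ C)
    (hloop : G.IsLoopEdge ℓ) : C = {ℓ} :=
  loop_component hC.1 (fun v hv => le_of_eq (hC.2.2.2 v hv)) hC.2.2.1 hℓ hloop

lemma cycle_loopless {C : Set E} {e' f' : E} (hC : G.IsCycle C) (he' : e' ∈ C)
    (hf' : f' ∈ C) (hne : e' ≠ f') {ℓ : E} (hℓ : ℓ ∈ C) : ¬ G.IsLoopEdge ℓ := by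
  intro hloop
  have h := cycle_loop_eq hC hℓ hloop
  rw [h] at he' hf'
  exact hne (he'.trans hf'.symm)

lemma path_loopless {P : Set E} (hP : G.IsPath P) {ℓ : E} (hℓ : ℓ ∈ P) :
    ¬ G.IsLoopEdge ℓ := by
  intro hloop
  have h := loop_component hP.1 hP.2.2.2.1 hP.2.2.1 hℓ hloop
  have hV : G.VSet P = {G.fst ℓ} := by
    rw [h]
    ext v
    constructor
    · rintro ⟨x, hx, hi⟩
      rcases hx with rfl
      rcases hi with h' | h'
      · exact h'.symm ▸ rfl
      · rw [← h', ← hloop]; rfl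
    · rintro rfl
      exact ⟨ℓ, rfl, Or.inl rfl⟩
  have hd : G.deg P (G.fst ℓ) = 2 := by
    rw [h, deg_def]
    have hA : G.sA {ℓ} (G.fst ℓ) = {ℓ} := by
      ext x
      constructor
      · exact fun hx => hx.1
      · rintro rfl; exact ⟨rfl, rfl⟩
    have hB : G.sB {ℓ} (G.fst ℓ) = {ℓ} := by
      ext x
      constructor
      · exact fun hx => hx.1
      · rintro rfl; exact ⟨rfl, hloop.symm⟩
    rw [hA, hB, Set.ncard_singleton]
  have hEnds : G.Ends P = ∅ := by
    ext v
    simp only [Ends, Set.mem_setOf_eq, Set.mem_empty_iff_false, iff_false]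
    rintro ⟨hv, hd1⟩
    rw [hV] at hv
    rcases hv with rfl
    rw [hd] at hd1
    omega
  have := hP.2.2.2.2
  rw [hEnds] at this
  simp at this

/-- A cycle contained in a set where every incident vertex has the same degree is everything. -/
lemma closure_eq {Z X : Set E} (hXfin : X.Finite) (hZX : Z ⊆ X) (hZne : Z.Nonempty)
    (hXconn : G.ConnectedOn X)
    (hdeg : ∀ v ∈ G.VSet Z, G.deg X v ≤ G.deg Z v) : Z = X := by
  obtain ⟨g₀, hg₀⟩ := hZne
  have key : ∀ h, Relation.ReflTransGen (G.EdgeAdj X) g₀ h → h ∈ Z := by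
    intro h hr
    induction hr with
    | refl => exact hg₀
    | @tail b c hb hadj ih =>
        obtain ⟨hbX, hcX, v, hvb, hvc⟩ := hadj
        have hvZ : v ∈ G.VSet Z := ⟨b, ih, hvb⟩
        exact mem_of_deg_eq hZX hXfin (hdeg v hvZ) hcX hvc
  exact Set.Subset.antisymm hZX (fun h hh => key h (hXconn (hZX hg₀) hh))

lemma cycle_subset_cycle_eq {Z C : Set E} (hZ : G.IsCycle Z) (hC : G.IsCycle C)
    (hZC : Z ⊆ C) : Z = C := by
  refine closure_eq hC.1 hZC hZ.2.1 hC.2.2.1 ?_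
  intro v hv
  rw [hZ.2.2.2 v hv, hC.2.2.2 v (VSet_mono hZC hv)]

lemma no_cycle_in_path {Z P : Set E} (hZ : G.IsCycle Z) (hP : G.IsPath P)
    (hZP : Z ⊆ P) : False := by
  have hEq : Z = P := by
    refine closure_eq hP.1 hZP hZ.2.1 hP.2.2.1 ?_
    intro v hv
    rw [hZ.2.2.2 v hv]
    exact hP.2.2.2.1 v (VSet_mono hZP hv)
  have hne : (G.Ends P).Nonempty := by
    apply Set.nonempty_of_ncard_ne_zero
    rw [hP.2.2.2.2]; omega
  obtain ⟨v, hvV, hvd⟩ := hne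
  have : G.deg Z v = 2 := hZ.2.2.2 v (hEq ▸ hvV)
  rw [hEq] at this
  omega

/-- A loopless vertex of degree 2 has exactly two incident edges. -/
lemma deg_two_pair {X : Set E} {a : V} (hfin : X.Finite) (hdeg : G.deg X a = 2)
    (hll : ∀ g ∈ X, G.Inc a g → ¬ G.IsLoopEdge g) :
    ∃ g₁ g₂, g₁ ≠ g₂ ∧ g₁ ∈ X ∧ g₂ ∈ X ∧ G.Inc a g₁ ∧ G.Inc a g₂ ∧
      ∀ x ∈ X, G.Inc a x → x = g₁ ∨ x = g₂ := by
  rw [deg_def] at hdeg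
  have hfa := hfin.subset (sA_subset (G := G) (X := X) (v := a))
  have hfb := hfin.subset (sB_subset (G := G) (X := X) (v := a))
  rcases (by omega : (G.sA X a).ncard = 0 ∨ (G.sA X a).ncard = 1 ∨ (G.sA X a).ncard = 2) with h0 | h1 | h2
  · -- sA empty, sB has two
    have hAe : G.sA X a = ∅ := (Set.ncard_eq_zero hfa).1 h0
    have hB2 : (G.sB X a).ncard = 2 := by omega
    obtain ⟨g₁, g₂, hne, hBe⟩ := Set.ncard_eq_two.1 hB2
    have hg₁ : g₁ ∈ G.sB X a := by rw [hBe]; exact Or.inl rfl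
    have hg₂ : g₂ ∈ G.sB X a := by rw [hBe]; exact Or.inr rfl
    refine ⟨g₁, g₂, hne, hg₁.1, hg₂.1, Or.inr hg₁.2, Or.inr hg₂.2, ?_⟩
    intro x hx hi
    rcases (inc_iff_mem_slots hx).1 hi with hm | hm
    · rw [hAe] at hm; exact absurd hm (Set.notMem_empty x)
    · rw [hBe] at hm; exact hm
  · -- one in each
    have hB1 : (G.sB X a).ncard = 1 := by omega
    obtain ⟨g₁, hAe⟩ := Set.ncard_eq_one.1 h1
    obtain ⟨g₂, hBe⟩ := Set.ncard_eq_one.1 hB1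
    have hg₁ : g₁ ∈ G.sA X a := by rw [hAe]; rfl
    have hg₂ : g₂ ∈ G.sB X a := by rw [hBe]; rfl
    have hne : g₁ ≠ g₂ := by
      rintro rfl
      exact hll g₁ hg₁.1 (Or.inl hg₁.2) (hg₁.2.trans hg₂.2.symm)
    refine ⟨g₁, g₂, hne, hg₁.1, hg₂.1, Or.inl hg₁.2, Or.inr hg₂.2, ?_⟩
    intro x hx hi
    rcases (inc_iff_mem_slots hx).1 hi with hm | hm
    · rw [hAe] at hm; exact Or.inl hm
    · rw [hBe] at hm; exact Or.inr hm
  · -- sA has two, sB empty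
    have hB0 : (G.sB X a).ncard = 0 := by omega
    have hBe : G.sB X a = ∅ := (Set.ncard_eq_zero hfb).1 hB0
    obtain ⟨g₁, g₂, hne, hAe⟩ := Set.ncard_eq_two.1 h2
    have hg₁ : g₁ ∈ G.sA X a := by rw [hAe]; exact Or.inl rfl
    have hg₂ : g₂ ∈ G.sA X a := by rw [hAe]; exact Or.inr rfl
    refine ⟨g₁, g₂, hne, hg₁.1, hg₂.1, Or.inl hg₁.2, Or.inl hg₂.2, ?_⟩
    intro x hx hi
    rcases (inc_iff_mem_slots hx).1 hi with hm | hm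
    · rw [hAe] at hm; exact hm
    · rw [hBe] at hm; exact absurd hm (Set.notMem_empty x)


lemma deg_singleton_inc {g : E} {v : V} (hl : ¬ G.IsLoopEdge g) (hi : G.Inc v g) :
    G.deg {g} v = 1 := by
  rcases hi with h | h
  · have hA : G.sA {g} v = {g} := by
      ext x
      constructor
      · exact fun hx => hx.1
      · rintro rfl; exact ⟨rfl, h⟩
    have hB : G.sB {g} v = ∅ := by
      ext x
      simp only [mem_sB, Set.mem_singleton_iff, Set.mem_empty_iff_false, iff_false]
      rintro ⟨rfl, hs⟩
      exact hl (h.trans hs.symm)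
    rw [deg_def, hA, hB]; simp
  · have hB : G.sB {g} v = {g} := by
      ext x
      constructor
      · exact fun hx => hx.1
      · rintro rfl; exact ⟨rfl, h⟩
    have hA : G.sA {g} v = ∅ := by
      ext x
      simp only [mem_sA, Set.mem_singleton_iff, Set.mem_empty_iff_false, iff_false]
      rintro ⟨rfl, hs⟩
      exact hl (hs.trans h.symm)
    rw [deg_def, hA, hB]; simp

lemma deg_singleton_not_inc {g : E} {v : V} (hi : ¬ G.Inc v g) : G.deg {g} v = 0 := by
  apply deg_eq_zero_of_not_mem_VSet
  rintro ⟨x, hx, hxi⟩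
  rcases hx with rfl
  exact hi hxi

lemma link_endpoints {g : E} {a w : V} (hl : ¬ G.IsLoopEdge g) (ha : G.Inc a g)
    (hw : G.Inc w g) (haw : a ≠ w) {z : V} (hz : G.Inc z g) : z = a ∨ z = w := by
  rcases ha with ha | ha <;> rcases hw with hw | hw <;> rcases hz with hz | hz
  · exact absurd (ha.symm.trans hw) haw
  · exact absurd (ha.symm.trans hw) haw
  · exact Or.inl (hz.symm.trans ha)
  · exact Or.inr (hz.symm.trans hw)
  · exact Or.inr (hz.symm.trans hw)
  · exact Or.inl (hz.symm.trans ha)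
  · exact absurd (ha.symm.trans hw) haw
  · exact absurd (ha.symm.trans hw) haw

lemma two_inc_deg {X : Set E} {x y : E} {w : V} (hfin : X.Finite) (hx : x ∈ X) (hy : y ∈ X)
    (hxy : x ≠ y) (hiw : G.Inc w x) (hiy : G.Inc w y) : 2 ≤ G.deg X w := by
  have hsub : {x, y} ⊆ G.sA X w ∪ G.sB X w := by
    intro t ht
    rcases ht with rfl | rfl
    · exact (inc_iff_mem_slots hx).1 hiw
    · exact (inc_iff_mem_slots hy).1 hiy
  have h1 := Set.ncard_le_ncard hsub ((hfin.subset sA_subset).union (hfin.subset sB_subset))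
  rw [Set.ncard_pair hxy] at h1
  have h2 := Set.ncard_union_le (G.sA X w) (G.sB X w)
  rw [deg_def]; omega

lemma connectedOn_union {X Y : Set E} (hX : G.ConnectedOn X) (hY : G.ConnectedOn Y)
    (hxy : ∃ x ∈ X, ∃ y ∈ Y, G.EdgeAdj (X ∪ Y) x y) : G.ConnectedOn (X ∪ Y) := by
  obtain ⟨x₀, hx₀, y₀, hy₀, hadj⟩ := hxy
  have liftX : ∀ {a b}, Relation.ReflTransGen (G.EdgeAdj X) a b →
      Relation.ReflTransGen (G.EdgeAdj (X ∪ Y)) a b := by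
    intro a b h
    induction h with
    | refl => exact Relation.ReflTransGen.refl
    | tail _ hadj' ih => exact ih.tail (hadj'.mono (Or.inl hadj'.1) (Or.inl hadj'.2.1))
  have liftY : ∀ {a b}, Relation.ReflTransGen (G.EdgeAdj Y) a b →
      Relation.ReflTransGen (G.EdgeAdj (X ∪ Y)) a b := by
    intro a b h
    induction h with
    | refl => exact Relation.ReflTransGen.refl
    | tail _ hadj' ih => exact ih.tail (hadj'.mono (Or.inr hadj'.1) (Or.inr hadj'.2.1))
  intro h₁ h₂ hh₁ hh₂
  rcases hh₁ with h | h <;> rcases hh₂ with h' | h'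
  · exact liftX (hX h h')
  · exact ((liftX (hX h hx₀)).tail hadj).trans (liftY (hY hy₀ h'))
  · exact rtg_symm (((liftX (hX h' hx₀)).tail hadj).trans (liftY (hY hy₀ h)))
  · exact liftY (hY h h')

lemma path_interior_deg {P : Set E} (hP : G.IsPath P) {v : V} (hv : v ∈ G.VSet P)
    (hne : v ∉ G.Ends P) : G.deg P v = 2 := by
  have h1 := deg_pos hP.1 hv
  have h2 := hP.2.2.2.1 v hv
  have : G.deg P v ≠ 1 := fun h => hne ⟨hv, h⟩
  omega

/-- Extending a path by a pendant link. -/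
lemma path_extend {P : Set E} {g : E} {a w b : V} (hP : G.IsPath P)
    (hE : G.Ends P = {w, b}) (hwb : w ≠ b) (hgP : g ∉ P) (hga : G.Inc a g)
    (hgw : G.Inc w g) (hgl : ¬ G.IsLoopEdge g) (haw : a ≠ w) (haV : a ∉ G.VSet P) :
    G.IsPath (P ∪ {g}) ∧ G.Ends (P ∪ {g}) = {a, b} := by
  have hfin : (P ∪ {g} : Set E).Finite := hP.1.union (Set.finite_singleton g)
  have hdisj : Disjoint P {g} := by
    rw [Set.disjoint_singleton_right]; exact hgP
  have hdeg : ∀ v, G.deg (P ∪ {g}) v = G.deg P v + G.deg {g} v := fun v =>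
    deg_union hdisj hP.1 (Set.finite_singleton g)
  have hwE : w ∈ G.Ends P := by rw [hE]; exact Or.inl rfl
  have hbE : b ∈ G.Ends P := by rw [hE]; exact Or.inr rfl
  have hwV : w ∈ G.VSet P := hwE.1
  have hbV : b ∈ G.VSet P := hbE.1
  have hba : b ≠ a := fun h => haV (h ▸ hbV)
  have hVu : G.VSet (P ∪ {g}) = G.VSet P ∪ {a, w} := by
    rw [VSet_union]
    congr 1
    ext z
    constructor
    · rintro ⟨x, hx, hxi⟩
      rcases hx with rfl
      rcases link_endpoints hgl hga hgw haw hxi with rfl | rfl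
      · exact Or.inl rfl
      · exact Or.inr rfl
    · rintro (rfl | rfl)
      · exact ⟨g, rfl, hga⟩
      · exact ⟨g, rfl, hgw⟩
  have hdegs : ∀ v ∈ G.VSet (P ∪ {g}), G.deg (P ∪ {g}) v ≤ 2 := by
    intro v hv
    rw [hdeg]
    by_cases hva : v = a
    · subst hva
      rw [deg_eq_zero_of_not_mem_VSet haV, deg_singleton_inc hgl hga]
      omega
    · by_cases hvw : v = w
      · subst hvw
        rw [hwE.2, deg_singleton_inc hgl hgw]
      · have hvg : ¬ G.Inc v g := by
          intro h
          rcases link_endpoints hgl hga hgw haw h with rfl | rfl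
          · exact hva rfl
          · exact hvw rfl
        rw [deg_singleton_not_inc hvg]
        have hvP : v ∈ G.VSet P := by
          rw [hVu] at hv
          rcases hv with h | h
          · exact h
          · rcases h with rfl | rfl
            · exact absurd rfl hva
            · exact absurd rfl hvw
        have := hP.2.2.2.1 v hvP
        omega
  have hEnds : G.Ends (P ∪ {g}) = {a, b} := by
    ext z
    simp only [Ends, Set.mem_setOf_eq, Set.mem_insert_iff, Set.mem_singleton_iff]
    constructor
    · rintro ⟨hzV, hzd⟩
      rw [hdeg] at hzd
      by_cases hza : z = a
      · exact Or.inl hza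
      · by_cases hzw : z = w
        · subst hzw
          rw [hwE.2, deg_singleton_inc hgl hgw] at hzd
          omega
        · right
          have hzg : ¬ G.Inc z g := by
            intro h
            rcases link_endpoints hgl hga hgw haw h with rfl | rfl
            · exact hza rfl
            · exact hzw rfl
          rw [deg_singleton_not_inc hzg] at hzd
          have hzP : z ∈ G.VSet P := by
            rw [hVu] at hzV
            rcases hzV with h | h
            · exact h
            · rcases h with rfl | rfl
              · exact absurd rfl hza
              · exact absurd rfl hzw
          have hzE : z ∈ G.Ends P := ⟨hzP, hzd⟩
          rw [hE] at hzE
          rcases hzE with rfl | rfl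
          · exact absurd rfl hzw
          · rfl
    · rintro (h | h)
      · refine ⟨by rw [hVu, h]; exact Or.inr (Or.inl rfl), ?_⟩
        rw [h, hdeg, deg_eq_zero_of_not_mem_VSet haV, deg_singleton_inc hgl hga]
      · refine ⟨by rw [hVu, h]; exact Or.inl hbV, ?_⟩
        have hbg : ¬ G.Inc b g := by
          intro hxx
          rcases link_endpoints hgl hga hgw haw hxx with h' | h'
          · exact hba h'
          · exact hwb h'.symm
        rw [h, hdeg, deg_singleton_not_inc hbg, hbE.2]
  have hconn : G.ConnectedOn (P ∪ {g}) := by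
    obtain ⟨p, hp, hpw⟩ := hwV
    refine connectedOn_union hP.2.2.1 ?_ ?_
    · intro x y hx hy
      rcases hx with rfl
      rcases hy with rfl
      exact Relation.ReflTransGen.refl
    · exact ⟨p, hp, g, rfl, ⟨Or.inl hp, Or.inr rfl, w, hpw, hgw⟩⟩
  refine ⟨⟨hfin, ⟨g, Or.inr rfl⟩, hconn, hdegs, ?_⟩, hEnds⟩
  rw [hEnds]
  exact Set.ncard_pair (fun h => hba h.symm)
lemma path_or_cycle_aux (n : ℕ) : ∀ {S : Set E}, S.ncard ≤ n → S.Finite → S.Nonempty →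
    G.ConnectedOn S → (∀ v ∈ G.VSet S, G.deg S v ≤ 2) → G.IsCycle S ∨ G.IsPath S := by
  induction n with
  | zero =>
      intro S hcard hfin hne _ _
      have : S.ncard = 0 := by omega
      rw [Set.ncard_eq_zero hfin] at this
      rw [this] at hne
      exact absurd hne (by simp)
  | succ n ih =>
      intro S hcard hfin hne hconn hdeg
      by_cases hall : ∀ v ∈ G.VSet S, G.deg S v = 2
      · exact Or.inl ⟨hfin, hne, hconn, hall⟩
      push_neg at hall
      obtain ⟨v, hvV, hvne⟩ := hall
      have hv1 : G.deg S v = 1 := by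
        have h1 := deg_pos hfin hvV
        have h2 := hdeg v hvV
        omega
      obtain ⟨g, hgS, hgv, huniq⟩ := deg_one_unique hfin hv1
      have hgl : ¬ G.IsLoopEdge g := by
        intro hloop
        have hfst : G.fst g = v := by
          rcases hgv with h | h
          · exact h
          · exact hloop.trans h
        have hsnd : G.snd g = v := hloop.symm.trans hfst
        have hA : g ∈ G.sA S v := ⟨hgS, hfst⟩
        have hB : g ∈ G.sB S v := ⟨hgS, hsnd⟩
        have h1 : 1 ≤ (G.sA S v).ncard :=
          (Set.ncard_pos (hfin.subset sA_subset)).2 ⟨g, hA⟩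
        have h2 : 1 ≤ (G.sB S v).ncard :=
          (Set.ncard_pos (hfin.subset sB_subset)).2 ⟨g, hB⟩
        rw [deg_def] at hv1
        omega
      obtain ⟨w, hgw, hwv⟩ : ∃ w, G.Inc w g ∧ w ≠ v := by
        by_cases hf : G.fst g = v
        · refine ⟨G.snd g, Or.inr rfl, fun h => hgl (hf.trans h.symm)⟩
        · rcases hgv with h | h
          · exact absurd h hf
          · exact ⟨G.fst g, Or.inl rfl, fun h' => hf h'⟩
      have hvw : v ≠ w := fun h => hwv h.symm
      by_cases hSg : S = {g}
      · right
        subst hSg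
        have hV : G.VSet {g} = {v, w} := by
          ext z
          constructor
          · rintro ⟨x, rfl, hxi⟩
            exact link_endpoints hgl hgv hgw hvw hxi
          · rintro (rfl | rfl)
            · exact ⟨g, rfl, hgv⟩
            · exact ⟨g, rfl, hgw⟩
        have hdg : ∀ z ∈ G.VSet {g}, G.deg {g} z = 1 := by
          intro z hz
          rw [hV] at hz
          rcases hz with rfl | rfl
          · exact deg_singleton_inc hgl hgv
          · exact deg_singleton_inc hgl hgw
        have hEnds : G.Ends {g} = {v, w} := by
          ext z
          constructor
          · rintro ⟨hz, _⟩
            rw [← hV]; exact hz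
          · intro hz
            rw [← hV] at hz
            exact ⟨hz, hdg z hz⟩
        refine ⟨hfin, hne, hconn, fun z hz => by rw [hdg z hz]; omega, ?_⟩
        rw [hEnds, Set.ncard_pair hvw]
      · have hne2 : ∃ x ∈ S, x ≠ g := by
          by_contra h
          push_neg at h
          apply hSg
          apply Set.Subset.antisymm
          · intro x hx; exact h x hx
          · intro x hx; rcases hx with rfl; exact hgS
        have hkey : ∀ x ∈ S, x ≠ g → G.EdgeAdj S g x → G.Inc w x := by
          intro x hx hxg hadj
          obtain ⟨_, _, z, hzg, hzx⟩ := hadj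
          rcases link_endpoints hgl hgv hgw hvw hzg with rfl | rfl
          · exact absurd (huniq x hx hzx) hxg
          · exact hzx
        obtain ⟨hconn', hwV'⟩ := excision hconn hgS hkey hne2
        have hsub : S \ {g} ⊆ S := Set.diff_subset
        have hfin' : (S \ {g}).Finite := hfin.subset hsub
        have hne' : (S \ {g}).Nonempty := by
          obtain ⟨x, hx, hxg⟩ := hne2
          exact ⟨x, hx, hxg⟩
        have hcard' : (S \ {g}).ncard < S.ncard := by
          apply Set.ncard_lt_ncard _ hfin
          exact ⟨hsub, fun h => (h hgS).2 rfl⟩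
        have hdeg' : ∀ z ∈ G.VSet (S \ {g}), G.deg (S \ {g}) z ≤ 2 := fun z hz =>
          le_trans (deg_mono hsub hfin) (hdeg z (VSet_mono hsub hz))
        rcases ih (by omega) hfin' hne' hconn' hdeg' with hC | hP
        · exfalso
          have h2 : G.deg (S \ {g}) w = 2 := hC.2.2.2 w hwV'
          have h3 := deg_remove_inc hfin hgS hgw hgl
          have h4 := hdeg w (VSet_mono hsub hwV')
          omega
        · have hw2 : G.deg S w = 2 := by
            obtain ⟨xw, hxw, hxwi⟩ := id hwV'
            have := two_inc_deg hfin hgS (hxw.1) (fun h => hxw.2 h.symm) hgw hxwi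
            have := hdeg w (VSet_mono hsub hwV')
            omega
          have hw1 : G.deg (S \ {g}) w = 1 := by
            have h3 := deg_remove_inc hfin hgS hgw hgl
            omega
          have hwE : w ∈ G.Ends (S \ {g}) := ⟨hwV', hw1⟩
          obtain ⟨p, q, hpq, hE'⟩ := Set.ncard_eq_two.1 hP.2.2.2.2
          obtain ⟨b, hwb, hE⟩ : ∃ b, w ≠ b ∧ G.Ends (S \ {g}) = {w, b} := by
            rw [hE'] at hwE
            rcases hwE with rfl | rfl
            · exact ⟨q, hpq, hE'⟩
            · exact ⟨p, fun h => hpq h.symm, by rw [hE', Set.pair_comm]⟩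
          have hvV' : v ∉ G.VSet (S \ {g}) := by
            rintro ⟨x, hx, hxi⟩
            exact hx.2 (huniq x hx.1 hxi)
          have hgS' : g ∉ S \ {g} := fun h => h.2 rfl
          obtain ⟨hpath, _⟩ := path_extend hP hE hwb hgS' hgv hgw hgl hvw hvV'
          have hU : S \ {g} ∪ {g} = S := Set.diff_union_of_subset (by simpa using hgS)
          right
          rwa [hU] at hpath

lemma path_or_cycle {S : Set E} (hfin : S.Finite) (hne : S.Nonempty)
    (hconn : G.ConnectedOn S) (hdeg : ∀ v ∈ G.VSet S, G.deg S v ≤ 2) :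
    G.IsCycle S ∨ G.IsPath S :=
  path_or_cycle_aux S.ncard le_rfl hfin hne hconn hdeg
lemma other_endpoint {g : E} {v : V} (hgl : ¬ G.IsLoopEdge g) (hgv : G.Inc v g) :
    ∃ w, G.Inc w g ∧ w ≠ v := by
  by_cases hf : G.fst g = v
  · exact ⟨G.snd g, Or.inr rfl, fun h => hgl (hf.trans h.symm)⟩
  · rcases hgv with h | h
    · exact absurd h hf
    · exact ⟨G.fst g, Or.inl rfl, fun h' => hf h'⟩

lemma single_path {g : E} {a b : V} (hgl : ¬ G.IsLoopEdge g) (ha : G.Inc a g)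
    (hb : G.Inc b g) (hab : a ≠ b) : G.IsPath {g} ∧ G.Ends {g} = {a, b} := by
  have hV : G.VSet {g} = {a, b} := by
    ext z
    constructor
    · rintro ⟨x, rfl, hxi⟩
      exact link_endpoints hgl ha hb hab hxi
    · rintro (rfl | rfl)
      · exact ⟨g, rfl, ha⟩
      · exact ⟨g, rfl, hb⟩
  have hdg : ∀ z ∈ G.VSet {g}, G.deg {g} z = 1 := by
    intro z hz
    rw [hV] at hz
    rcases hz with rfl | rfl
    · exact deg_singleton_inc hgl ha
    · exact deg_singleton_inc hgl hb
  have hEnds : G.Ends {g} = {a, b} := by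
    ext z
    constructor
    · rintro ⟨hz, _⟩
      rw [← hV]; exact hz
    · intro hz
      rw [← hV] at hz
      exact ⟨hz, hdg z hz⟩
  have hconn : G.ConnectedOn {g} := by
    intro x y hx hy
    rcases hx with rfl
    rcases hy with rfl
    exact Relation.ReflTransGen.refl
  refine ⟨⟨Set.finite_singleton g, ⟨g, rfl⟩, hconn, fun z hz => by rw [hdg z hz]; omega, ?_⟩, hEnds⟩
  rw [hEnds, Set.ncard_pair hab]

lemma path_split_aux (n : ℕ) : ∀ {P : Set E} {x y v : V}, P.ncard ≤ n → G.IsPath P →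
    G.Ends P = {x, y} → x ≠ y → v ∈ G.VSet P → v ∉ G.Ends P →
    ∃ A B, A ∪ B = P ∧ Disjoint A B ∧ G.IsPath A ∧ G.IsPath B ∧
      G.Ends A = {x, v} ∧ G.Ends B = {v, y} := by
  induction n with
  | zero =>
      intro P x y v hcard hP _ _ _ _
      have := (Set.ncard_pos hP.1).2 hP.2.1
      omega
  | succ n ih =>
      intro P x y v hcard hP hE hxy hvV hvE
      have hxE : x ∈ G.Ends P := by rw [hE]; exact Or.inl rfl
      have hyE : y ∈ G.Ends P := by rw [hE]; exact Or.inr rfl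
      have hvx : v ≠ x := fun h => hvE (h ▸ hxE)
      have hvy : v ≠ y := fun h => hvE (h ▸ hyE)
      obtain ⟨ga, hga, hgax, huniq⟩ := deg_one_unique hP.1 hxE.2
      have hgl : ¬ G.IsLoopEdge ga := path_loopless hP hga
      obtain ⟨w, hgw, hwx⟩ := other_endpoint hgl hgax
      have hxw : x ≠ w := fun h => hwx h.symm
      -- P is not a single edge
      have hvdeg : G.deg P v = 2 := path_interior_deg hP hvV hvE
      have hne2 : ∃ h ∈ P, h ≠ ga := by
        by_contra hcon
        push_neg at hcon
        -- then P = {ga}, and v has degree ≤ 1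
        obtain ⟨z, hz, hzi⟩ := hvV
        have hzga : z = ga := hcon z hz
        rw [hzga] at hzi
        rcases link_endpoints hgl hgax hgw hxw hzi with rfl | rfl
        · exact hvx rfl
        · -- v = w, deg P v = 2 but every edge is ga
          have hsub : P ⊆ {ga} := fun t ht => hcon t ht
          have := deg_mono (G := G) (v := v) hsub (Set.finite_singleton ga)
          rw [deg_singleton_inc hgl hgw] at this
          omega
      have hkey : ∀ t ∈ P, t ≠ ga → G.EdgeAdj P ga t → G.Inc w t := by
        intro t ht htg hadj
        obtain ⟨_, _, z, hzg, hzt⟩ := hadj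
        rcases link_endpoints hgl hgax hgw hxw hzg with rfl | rfl
        · exact absurd (huniq t ht hzt) htg
        · exact hzt
      obtain ⟨hconn', hwV'⟩ := excision hP.2.2.1 hga hkey hne2
      have hsub : (P \ {ga}) ⊆ P := Set.diff_subset
      have hfin' : (P \ {ga}).Finite := hP.1.subset hsub
      have hne' : (P \ {ga}).Nonempty := by
        obtain ⟨t, ht, htg⟩ := hne2
        exact ⟨t, ht, htg⟩
      have hdeg' : ∀ z ∈ G.VSet (P \ {ga}), G.deg (P \ {ga}) z ≤ 2 := fun z hz =>
        le_trans (deg_mono hsub hP.1) (hP.2.2.2.1 z (VSet_mono hsub hz))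
      have hQpath : G.IsPath (P \ {ga}) := by
        rcases path_or_cycle hfin' hne' hconn' hdeg' with hC | hp
        · exact absurd hsub (fun h => no_cycle_in_path hC hP h)
        · exact hp
      have hgaonly : ∀ z, G.Inc z ga → z = x ∨ z = w :=
        fun z hz => link_endpoints hgl hgax hgw hxw hz
      have hwy : w ≠ y := by
        rintro rfl
        have h1 : G.deg (P \ {ga}) w + 1 = G.deg P w := deg_remove_inc hP.1 hga hgw hgl
        have h2 : 1 ≤ G.deg (P \ {ga}) w := deg_pos hfin' hwV'
        rw [hyE.2] at h1
        omega
      have hwdeg : G.deg P w = 2 := by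
        have hwEnds : w ∉ G.Ends P := by
          intro hmem
          rw [hE] at hmem
          rcases hmem with rfl | rfl
          · exact hxw rfl
          · exact hwy rfl
        exact path_interior_deg hP (VSet_mono hsub hwV') hwEnds
      have hw1 : G.deg (P \ {ga}) w = 1 := by
        have h1 := deg_remove_inc hP.1 hga hgw hgl
        omega
      have hwE' : w ∈ G.Ends (P \ {ga}) := ⟨hwV', hw1⟩
      have hyV' : y ∈ G.VSet (P \ {ga}) := by
        obtain ⟨t, ht, hti⟩ := hyE.1
        have : t ≠ ga := by
          rintro rfl
          rcases hgaonly y hti with rfl | rfl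
          · exact hxy rfl
          · exact hwy rfl
        exact ⟨t, ⟨ht, this⟩, hti⟩
      have hyInc : ¬ G.Inc y ga := by
        intro h
        rcases hgaonly y h with rfl | rfl
        · exact hxy rfl
        · exact hwy rfl
      have hyE' : y ∈ G.Ends (P \ {ga}) := by
        refine ⟨hyV', ?_⟩
        rw [deg_remove_not_inc hyInc]
        exact hyE.2
      have hEnds' : G.Ends (P \ {ga}) = {w, y} := by
        obtain ⟨p, q, hpq, hEpq⟩ := Set.ncard_eq_two.1 hQpath.2.2.2.2
        have hwm : w ∈ ({p, q} : Set V) := hEpq ▸ hwE'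
        have hym : y ∈ ({p, q} : Set V) := hEpq ▸ hyE'
        rcases hwm with rfl | rfl
        · rcases hym with rfl | rfl
          · exact absurd rfl hwy
          · exact hEpq
        · rcases hym with rfl | rfl
          · rw [hEpq, Set.pair_comm]
          · exact absurd rfl hwy
      have hxV' : x ∉ G.VSet (P \ {ga}) := by
        rintro ⟨t, ht, hti⟩
        exact ht.2 (huniq t ht.1 hti)
      by_cases hvw : v = w
      · subst hvw
        obtain ⟨hsp, hse⟩ := single_path hgl hgax hgw hxw
        refine ⟨{ga}, (P \ {ga}), ?_, ?_, hsp, hQpath, by rw [hse], by rw [hEnds']⟩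
        · rw [Set.union_comm]
          exact Set.diff_union_of_subset (by simpa using hga)
        · rw [Set.disjoint_singleton_left]
          exact fun h => h.2 rfl
      · have hvInc : ¬ G.Inc v ga := by
          intro h
          rcases hgaonly v h with rfl | rfl
          · exact hvx rfl
          · exact hvw rfl
        have hvV' : v ∈ G.VSet (P \ {ga}) := by
          obtain ⟨t, ht, hti⟩ := hvV
          have : t ≠ ga := by
            rintro rfl
            exact hvInc hti
          exact ⟨t, ⟨ht, this⟩, hti⟩
        have hvE' : v ∉ G.Ends (P \ {ga}) := by
          intro h
          rw [hEnds'] at h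
          rcases h with h | h
          · exact hvw h
          · exact hvy h
        have hcard' : (P \ {ga}).ncard ≤ n := by
          have : (P \ {ga}).ncard < P.ncard := by
            apply Set.ncard_lt_ncard _ hP.1
            exact ⟨hsub, fun h => (h hga).2 rfl⟩
          omega
        obtain ⟨A', B', hAB, hdisj, hApath, hBpath, hAe, hBe⟩ :=
          ih hcard' hQpath hEnds' hwy hvV' hvE'
        have hgaA' : ga ∉ A' := fun h => (hAB ▸ Or.inl h : ga ∈ (P \ {ga})).2 rfl
        have hxVA' : x ∉ G.VSet A' := fun h => hxV' (VSet_mono (hAB ▸ Set.subset_union_left) h)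
        obtain ⟨hApath2, hAe2⟩ := path_extend hApath hAe (fun h => hvw h.symm) hgaA'
          hgax hgw hgl hxw hxVA'
        refine ⟨A' ∪ {ga}, B', ?_, ?_, hApath2, hBpath, ?_, hBe⟩
        · rw [Set.union_comm A' {ga}, Set.union_assoc, hAB, Set.union_comm]
          exact Set.diff_union_of_subset (by simpa using hga)
        · rw [Set.disjoint_union_left]
          constructor
          · exact hdisj
          · rw [Set.disjoint_singleton_left]
            intro h
            exact (hAB ▸ Or.inr h : ga ∈ (P \ {ga})).2 rfl
        · rw [hAe2, Set.pair_comm]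
lemma cycle_minus_edge {C : Set E} {g : E} {a a₂ : V} (hC : G.IsCycle C) (hg : g ∈ C)
    (hgl : ¬ G.IsLoopEdge g) (ha : G.Inc a g) (ha₂ : G.Inc a₂ g) (haa : a ≠ a₂)
    (hne2 : ∃ x ∈ C, x ≠ g) :
    G.IsPath (C \ {g}) ∧ G.Ends (C \ {g}) = {a, a₂} := by
  have hsub : C \ {g} ⊆ C := Set.diff_subset
  have hfin' : (C \ {g}).Finite := hC.1.subset hsub
  have hne' : (C \ {g}).Nonempty := by
    obtain ⟨x, hx, hxg⟩ := hne2
    exact ⟨x, hx, hxg⟩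
  have hdegC : ∀ z ∈ G.VSet C, G.deg C z = 2 := hC.2.2.2
  have hdeg' : ∀ z ∈ G.VSet (C \ {g}), G.deg (C \ {g}) z ≤ 2 := fun z hz =>
    le_trans (deg_mono hsub hC.1) (le_of_eq (hdegC z (VSet_mono hsub hz)))
  -- every end of (a component of) C \ {g} is a or a₂
  have hEndMem : ∀ z ∈ G.VSet (C \ {g}), G.deg (C \ {g}) z = 1 → z = a ∨ z = a₂ := by
    intro z hz hz1
    by_cases hzi : G.Inc z g
    · exact link_endpoints hgl ha ha₂ haa hzi
    · exfalso
      have := deg_remove_not_inc (X := C) hzi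
      rw [hz1] at this
      have := hdegC z (VSet_mono hsub hz)
      omega
  -- degree of a in C \ {g} is one; let g₂ be its unique edge
  have hdega : G.deg (C \ {g}) a = 1 := by
    have h1 := deg_remove_inc hC.1 hg ha hgl
    have h2 := hdegC a ⟨g, hg, ha⟩
    omega
  obtain ⟨g₂, hg₂, hg₂a, hg₂uniq⟩ := deg_one_unique hfin' hdega
  -- each component is a path with ends {a, a₂}, hence contains g₂
  have hcompconn : ∀ h ∈ C \ {g}, g₂ ∈ G.comp (C \ {g}) h := by
    intro h hh
    have hKsub : G.comp (C \ {g}) h ⊆ C \ {g} := comp_subset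
    have hKne : (G.comp (C \ {g}) h).Nonempty := ⟨h, mem_comp_self hh⟩
    have hKfin : (G.comp (C \ {g}) h).Finite := hfin'.subset hKsub
    have hKdegeq : ∀ z ∈ G.VSet (G.comp (C \ {g}) h), G.deg (G.comp (C \ {g}) h) z
        = G.deg (C \ {g}) z := fun z hz => comp_deg hz
    have hKdeg : ∀ z ∈ G.VSet (G.comp (C \ {g}) h), G.deg (G.comp (C \ {g}) h) z ≤ 2 := by
      intro z hz
      rw [hKdegeq z hz]
      exact hdeg' z (VSet_mono hKsub hz)
    rcases path_or_cycle hKfin hKne (comp_connected hh) hKdeg with hcyc | hpath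
    · exfalso
      have := cycle_subset_cycle_eq hcyc hC (hKsub.trans hsub)
      have hgK : g ∈ G.comp (C \ {g}) h := by rw [this]; exact hg
      exact (hKsub hgK).2 rfl
    · -- ends of this path are a and a₂; so a ∈ its vertex set
      have hEndsK : ∀ z ∈ G.Ends (G.comp (C \ {g}) h), z = a ∨ z = a₂ := by
        intro z hz
        refine hEndMem z (VSet_mono hKsub hz.1) ?_
        rw [← hKdegeq z hz.1]
        exact hz.2
      have haK : a ∈ G.VSet (G.comp (C \ {g}) h) := by
        obtain ⟨p, q, hpq, hEpq⟩ := Set.ncard_eq_two.1 hpath.2.2.2.2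
        have hp : p ∈ G.Ends (G.comp (C \ {g}) h) := by rw [hEpq]; exact Or.inl rfl
        have hq : q ∈ G.Ends (G.comp (C \ {g}) h) := by rw [hEpq]; exact Or.inr rfl
        rcases hEndsK p hp with rfl | rfl
        · exact hp.1
        · rcases hEndsK q hq with rfl | rfl
          · exact hq.1
          · exact absurd rfl hpq
      obtain ⟨t, ht, hti⟩ := haK
      have : t = g₂ := hg₂uniq t (hKsub ht) hti
      exact this ▸ ht
  have hconn' : G.ConnectedOn (C \ {g}) := by
    intro h₁ h₂ hh₁ hh₂
    have r1 : Relation.ReflTransGen (G.EdgeAdj (C \ {g})) h₁ g₂ := (hcompconn h₁ hh₁).2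
    have r2 : Relation.ReflTransGen (G.EdgeAdj (C \ {g})) h₂ g₂ := (hcompconn h₂ hh₂).2
    exact r1.trans (rtg_symm r2)
  have hpath : G.IsPath (C \ {g}) := by
    rcases path_or_cycle hfin' hne' hconn' hdeg' with hcyc | hp
    · exfalso
      have heq := cycle_subset_cycle_eq hcyc hC hsub
      have : g ∈ C \ {g} := by rw [heq]; exact hg
      exact this.2 rfl
    · exact hp
  refine ⟨hpath, ?_⟩
  have hsubE : G.Ends (C \ {g}) ⊆ {a, a₂} := by
    intro z hz
    exact hEndMem z hz.1 hz.2
  refine Set.eq_of_subset_of_ncard_le hsubE ?_ (Set.toFinite _)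
  rw [hpath.2.2.2.2, Set.ncard_pair haa]

lemma cycle_split {C : Set E} {a b : V} (hC : G.IsCycle C) (ha : a ∈ G.VSet C)
    (hb : b ∈ G.VSet C) (hab : a ≠ b) :
    ∃ R₁ R₂, R₁ ∪ R₂ = C ∧ Disjoint R₁ R₂ ∧ G.IsPath R₁ ∧ G.IsPath R₂ ∧
      G.Ends R₁ = {a, b} ∧ G.Ends R₂ = {a, b} := by
  have hll : ∀ ℓ ∈ C, ¬ G.IsLoopEdge ℓ := by
    intro ℓ hℓ hloop
    have hCl := cycle_loop_eq hC hℓ hloop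
    have hfix : ∀ z ∈ G.VSet C, z = G.fst ℓ := by
      intro z hz
      rw [hCl] at hz
      obtain ⟨x, hx, hxi⟩ := hz
      have hxe : x = ℓ := hx
      rw [hxe] at hxi
      rcases hxi with h | h
      · exact h.symm
      · rw [← h, hloop]
    exact hab ((hfix a ha).trans (hfix b hb).symm)
  have hda : G.deg C a = 2 := hC.2.2.2 a ha
  obtain ⟨g₁, g₂, h12, hg₁, hg₂, hg₁a, hg₂a, hcover⟩ :=
    deg_two_pair hC.1 hda (fun g hg _ => hll g hg)
  have hgl₁ : ¬ G.IsLoopEdge g₁ := hll g₁ hg₁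
  obtain ⟨a₂, ha₂, ha₂a⟩ := other_endpoint hgl₁ hg₁a
  have hane : a ≠ a₂ := fun h => ha₂a h.symm
  have hne2 : ∃ x ∈ C, x ≠ g₁ := ⟨g₂, hg₂, fun h => h12 h.symm⟩
  obtain ⟨hPpath, hPEnds⟩ := cycle_minus_edge hC hg₁ hgl₁ hg₁a ha₂ hane hne2
  have hUP : C \ {g₁} ∪ {g₁} = C := Set.diff_union_of_subset (by simpa using hg₁)
  by_cases hba : b = a₂
  · subst hba
    obtain ⟨hsp, hse⟩ := single_path hgl₁ hg₁a ha₂ hane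
    refine ⟨C \ {g₁}, {g₁}, hUP, ?_, hPpath, hsp, hPEnds, hse⟩
    rw [Set.disjoint_singleton_right]
    exact fun h => h.2 rfl
  · -- split the path at b
    have hbV' : b ∈ G.VSet (C \ {g₁}) := by
      obtain ⟨t, ht, hti⟩ := hb
      have htg : t ≠ g₁ := by
        rintro rfl
        rcases link_endpoints hgl₁ hg₁a ha₂ hane hti with rfl | rfl
        · exact hab rfl
        · exact hba rfl
      exact ⟨t, ⟨ht, htg⟩, hti⟩
    have hbE' : b ∉ G.Ends (C \ {g₁}) := by
      intro h
      rw [hPEnds] at h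
      rcases h with h | h
      · exact hab h.symm
      · exact hba h
    obtain ⟨A, B, hABu, hABd, hApath, hBpath, hAe, hBe⟩ :=
      path_split_aux (C \ {g₁}).ncard le_rfl hPpath hPEnds hane hbV' hbE'
    -- extend B (ends {b, a₂}) by g₁ at a₂, obtaining ends {a, b}
    have hg₁B : g₁ ∉ B := fun h => (hABu ▸ Or.inr h : g₁ ∈ C \ {g₁}).2 rfl
    have haVB : a ∉ G.VSet B := by
      intro haB
      -- a is an end of A, so it has an edge in A; an edge in B would give degree ≥ 2
      have haA : a ∈ G.VSet A := by
        have : a ∈ G.Ends A := by rw [hAe]; exact Or.inl rfl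
        exact this.1
      obtain ⟨tA, htA, htAi⟩ := haA
      obtain ⟨tB, htB, htBi⟩ := haB
      have htAB : tA ≠ tB := by
        intro h
        exact (Set.disjoint_left.1 hABd) htA (h ▸ htB)
      have h2 : 2 ≤ G.deg (C \ {g₁}) a := by
        refine two_inc_deg (hC.1.subset Set.diff_subset) ?_ ?_ htAB htAi htBi
        · exact hABu ▸ Or.inl htA
        · exact hABu ▸ Or.inr htB
      have h1 : G.deg (C \ {g₁}) a + 1 = G.deg C a := deg_remove_inc hC.1 hg₁ hg₁a hgl₁
      omega
    have hBe' : G.Ends B = {a₂, b} := by rw [hBe, Set.pair_comm]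
    obtain ⟨hB2path, hB2e⟩ := path_extend hBpath hBe' (fun h => hba h.symm) hg₁B hg₁a ha₂
      hgl₁ hane haVB
    refine ⟨A, B ∪ {g₁}, ?_, ?_, hApath, hB2path, hAe, by rw [hB2e]⟩
    · rw [← Set.union_assoc, hABu, hUP]
    · rw [Set.disjoint_union_right]
      refine ⟨hABd, ?_⟩
      rw [Set.disjoint_singleton_right]
      intro h
      exact (hABu ▸ Or.inl h : g₁ ∈ C \ {g₁}).2 rfl
lemma glue_paths {Q R : Set E} {a b : V} (hQ : G.IsPath Q) (hR : G.IsPath R)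
    (hQe : G.Ends Q = {a, b}) (hRe : G.Ends R = {a, b}) (hab : a ≠ b)
    (hdisj : Disjoint Q R) (hV : G.VSet Q ∩ G.VSet R ⊆ {a, b}) :
    G.IsCycle (Q ∪ R) := by
  have haQ : a ∈ G.Ends Q := by rw [hQe]; exact Or.inl rfl
  have hbQ : b ∈ G.Ends Q := by rw [hQe]; exact Or.inr rfl
  have haR : a ∈ G.Ends R := by rw [hRe]; exact Or.inl rfl
  have hbR : b ∈ G.Ends R := by rw [hRe]; exact Or.inr rfl
  have hdeg : ∀ v, G.deg (Q ∪ R) v = G.deg Q v + G.deg R v := fun v =>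
    deg_union hdisj hQ.1 hR.1
  refine ⟨hQ.1.union hR.1, hQ.2.1.mono Set.subset_union_left, ?_, ?_⟩
  · -- connectivity
    obtain ⟨q, hq, hqa⟩ := haQ.1
    obtain ⟨r, hr, hra⟩ := haR.1
    exact connectedOn_union hQ.2.2.1 hR.2.2.1
      ⟨q, hq, r, hr, ⟨Or.inl hq, Or.inr hr, a, hqa, hra⟩⟩
  · intro v hv
    rw [hdeg]
    rw [VSet_union] at hv
    by_cases hva : v = a
    · subst hva
      rw [haQ.2, haR.2]
    · by_cases hvb : v = b
      · subst hvb
        rw [hbQ.2, hbR.2]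
      · -- v is interior to exactly one of the two paths
        have hnotboth : ¬ (v ∈ G.VSet Q ∧ v ∈ G.VSet R) := by
          rintro ⟨h1, h2⟩
          rcases hV ⟨h1, h2⟩ with h | h
          · exact hva h
          · exact hvb h
        have hvEQ : v ∉ G.Ends Q := by
          intro h
          rw [hQe] at h
          rcases h with h | h
          · exact hva h
          · exact hvb h
        have hvER : v ∉ G.Ends R := by
          intro h
          rw [hRe] at h
          rcases h with h | h
          · exact hva h
          · exact hvb h
        rcases hv with h | h
        · have h2 : v ∉ G.VSet R := fun hh => hnotboth ⟨h, hh⟩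
          rw [path_interior_deg hQ h hvEQ, deg_eq_zero_of_not_mem_VSet h2]
        · have h2 : v ∉ G.VSet Q := fun hh => hnotboth ⟨hh, h⟩
          rw [path_interior_deg hR h hvER, deg_eq_zero_of_not_mem_VSet h2]

lemma inc_card_le_deg {X : Set E} {T : Set E} {w : V} (hfin : X.Finite) (hT : T ⊆ X)
    (hinc : ∀ t ∈ T, G.Inc w t) : T.ncard ≤ G.deg X w := by
  have hsub : T ⊆ G.sA X w ∪ G.sB X w := by
    intro t ht
    exact (inc_iff_mem_slots (hT ht)).1 (hinc t ht)
  have h1 := Set.ncard_le_ncard hsub ((hfin.subset sA_subset).union (hfin.subset sB_subset))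
  have h2 := Set.ncard_union_le (G.sA X w) (G.sB X w)
  rw [deg_def]
  omega

/-- In a cycle containing two distinct links at `u`, these are the only edges at `u`. -/
lemma cycle_two_links {C : Set E} (hC : G.IsCycle C) {e f : E} {u : V} (he : e ∈ C)
    (hf : f ∈ C) (hef : e ≠ f) (hue : G.Inc u e) (huf : G.Inc u f) :
    ∀ g ∈ C, G.Inc u g → g = e ∨ g = f := by
  intro g hg hug
  by_contra hcon
  push_neg at hcon
  have hT : ({e, f, g} : Set E) ⊆ C := by
    intro t ht
    rcases ht with rfl | rfl | rfl
    · exact he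
    · exact hf
    · exact hg
  have hcard : ({e, f, g} : Set E).ncard = 3 := by
    rw [Set.ncard_insert_of_notMem (by
      simp only [Set.mem_insert_iff, Set.mem_singleton_iff]
      push_neg
      exact ⟨hef, fun h => hcon.1 h.symm⟩) (Set.toFinite _),
      Set.ncard_pair (fun h => hcon.2 h.symm)]
  have hd := hC.2.2.2 u ⟨e, he, hue⟩
  have h3 : ({e, f, g} : Set E).ncard ≤ G.deg C u := by
    apply inc_card_le_deg hC.1 hT
    intro t ht
    rcases ht with rfl | rfl | rfl
    · exact hue
    · exact huf
    · exact hug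
  omega

/-- Extraction of a minimal "ear": a path in `C' \ D` whose ends lie in `D` and whose
interior avoids `D`. -/
lemma ear_exists {C' D : Set E} (hC' : G.IsCycle C')
    (hshared : ∃ x, x ∈ C' ∧ x ∈ D) (hne : (C' \ D).Nonempty) :
    ∃ Q a b, Q ⊆ C' \ D ∧ G.IsPath Q ∧ a ≠ b ∧ G.Ends Q = {a, b} ∧ a ∈ G.VSet D ∧
      b ∈ G.VSet D ∧ ∀ z ∈ G.VSet Q, z ≠ a → z ≠ b → z ∉ G.VSet D := by
  obtain ⟨x₀, hx₀C, hx₀D⟩ := hshared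
  have hXsub : C' \ D ⊆ C' := Set.diff_subset
  have hXfin : (C' \ D).Finite := hC'.1.subset hXsub
  -- a good set: a path inside C' \ D whose ends lie on D
  set Good : Set E → Prop :=
    fun S => S ⊆ C' \ D ∧ G.IsPath S ∧ ∀ z ∈ G.Ends S, z ∈ G.VSet D with hGood
  -- ends of subpaths of C' \ D whose degree drops lie on D
  have hEndD : ∀ S, S ⊆ C' \ D → ∀ z, z ∈ G.VSet S → G.deg (C' \ D) z = 1 →
      z ∈ G.VSet D := by
    intro S hS z hzV hz1
    by_contra hzD
    -- then every C'-edge at z lies in C' \ D, contradicting deg C' z = 2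
    have hall : ∀ h ∈ C', G.Inc z h → h ∈ C' \ D := by
      intro h hh hzi
      refine ⟨hh, fun hD => hzD ⟨h, hD, hzi⟩⟩
    have hle : G.deg C' z ≤ G.deg (C' \ D) z := by
      have hA : G.sA C' z ⊆ G.sA (C' \ D) z := by
        intro t ht
        exact ⟨hall t ht.1 (Or.inl ht.2), ht.2⟩
      have hB : G.sB C' z ⊆ G.sB (C' \ D) z := by
        intro t ht
        exact ⟨hall t ht.1 (Or.inr ht.2), ht.2⟩
      rw [deg_def, deg_def]
      have := Set.ncard_le_ncard hA (hXfin.subset sA_subset)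
      have := Set.ncard_le_ncard hB (hXfin.subset sB_subset)
      omega
    have hzC : z ∈ G.VSet C' := VSet_mono (hS.trans hXsub) hzV
    have := hC'.2.2.2 z hzC
    omega
  -- an initial good set: any connected component of C' \ D
  have hGood₀ : ∃ S, Good S := by
    obtain ⟨g₀, hg₀⟩ := hne
    set K := G.comp (C' \ D) g₀ with hK
    have hKsub : K ⊆ C' \ D := comp_subset
    have hKne : K.Nonempty := ⟨g₀, mem_comp_self hg₀⟩
    have hKfin : K.Finite := hXfin.subset hKsub
    have hKdeg : ∀ z ∈ G.VSet K, G.deg K z ≤ 2 := by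
      intro z hz
      rw [comp_deg hz]
      refine le_trans (deg_mono hXsub hC'.1) ?_
      exact le_of_eq (hC'.2.2.2 z (VSet_mono (hKsub.trans hXsub) hz))
    rcases path_or_cycle hKfin hKne (comp_connected hg₀) hKdeg with hcyc | hpath
    · exfalso
      have heq := cycle_subset_cycle_eq hcyc hC' (hKsub.trans hXsub)
      have : x₀ ∈ K := by rw [heq]; exact hx₀C
      exact (hKsub this).2 hx₀D
    · refine ⟨K, hKsub, hpath, ?_⟩
      intro z hz
      refine hEndD K hKsub z hz.1 ?_
      rw [← comp_deg hz.1]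
      exact hz.2
  -- take a minimal good set
  obtain ⟨S₀, hS₀⟩ := hGood₀
  -- auxiliary: minimize
  suffices hmin : ∀ (n : ℕ) (S : Set E), Good S → S.ncard ≤ n →
      ∃ Q a b, Q ⊆ C' \ D ∧ G.IsPath Q ∧ a ≠ b ∧ G.Ends Q = {a, b} ∧ a ∈ G.VSet D ∧
        b ∈ G.VSet D ∧ ∀ z ∈ G.VSet Q, z ≠ a → z ≠ b → z ∉ G.VSet D by
    exact hmin S₀.ncard S₀ hS₀ le_rfl
  intro n
  induction n with
  | zero =>
      intro S hS hcard
      have := (Set.ncard_pos (hXfin.subset hS.1)).2 hS.2.1.2.1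
      omega
  | succ n ih =>
      intro S hS hcard
      obtain ⟨hSsub, hSpath, hSends⟩ := hS
      obtain ⟨a, b, hab, hE⟩ := Set.ncard_eq_two.1 hSpath.2.2.2.2
      have haD : a ∈ G.VSet D := hSends a (by rw [hE]; exact Or.inl rfl)
      have hbD : b ∈ G.VSet D := hSends b (by rw [hE]; exact Or.inr rfl)
      by_cases hclean : ∀ z ∈ G.VSet S, z ≠ a → z ≠ b → z ∉ G.VSet D
      · exact ⟨S, a, b, hSsub, hSpath, hab, hE, haD, hbD, hclean⟩
      · push_neg at hclean
        obtain ⟨v, hvV, hva, hvb, hvD⟩ := hclean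
        have hvE : v ∉ G.Ends S := by
          intro h
          rw [hE] at h
          rcases h with h | h
          · exact hva h
          · exact hvb h
        obtain ⟨A, B, hABu, hABd, hApath, hBpath, hAe, hBe⟩ :=
          path_split_aux S.ncard le_rfl hSpath hE hab hvV hvE
        have hAsub : A ⊆ S := hABu ▸ Set.subset_union_left
        have hAcard : A.ncard < S.ncard := by
          have hBne := (Set.ncard_pos (hXfin.subset ((hABu ▸ Set.subset_union_right).trans hSsub))).2 hBpath.2.1
          have : S.ncard = A.ncard + B.ncard := by
            rw [← hABu, Set.ncard_union_eq hABd
              (hXfin.subset (hAsub.trans hSsub))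
              (hXfin.subset ((hABu ▸ Set.subset_union_right).trans hSsub))]
          omega
        refine ih A ⟨hAsub.trans hSsub, hApath, ?_⟩ (by omega)
        intro z hz
        rw [hAe] at hz
        rcases hz with rfl | rfl
        · exact haD
        · exact hvD
end MultiGraph

open MultiGraph in
private lemma key_balance {V E : Type*} (Ω : BiasedGraph V E) (hθ : Ω.ThetaProperty) (u : V)
    (hbal : ∀ C : Set E, Ω.toMultiGraph.IsCycle C → u ∉ Ω.toMultiGraph.VSet C → C ∈ Ω.Balanced)
    (e f : E) (hue : Ω.toMultiGraph.Inc u e) (huf : Ω.toMultiGraph.Inc u f) (hef : e ≠ f) :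
    ∀ (n : ℕ) (D C' : Set E), Ω.toMultiGraph.IsCycle D → Ω.toMultiGraph.IsCycle C' →
      e ∈ D → f ∈ D → e ∈ C' → f ∈ C' → (D ∪ C').ncard ≤ n →
      (D ∈ Ω.Balanced ↔ C' ∈ Ω.Balanced) := by
  set G := Ω.toMultiGraph with hG
  intro n
  induction n with
  | zero =>
      intro D C' hD hC' heD _ _ _ hcard
      exfalso
      have : (0 : ℕ) < (D ∪ C').ncard :=
        (Set.ncard_pos (hD.1.union hC'.1)).2 ⟨e, Or.inl heD⟩
      omega
  | succ n ih =>
      intro D C' hD hC' heD hfD heC hfC hcard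
      by_cases hsubE : C' \ D = ∅
      · have : C' = D := cycle_subset_cycle_eq hC' hD (Set.diff_eq_empty.1 hsubE)
        rw [this]
      · have hne : (C' \ D).Nonempty := Set.nonempty_iff_ne_empty.2 hsubE
        obtain ⟨Q, a, b, hQsub, hQpath, hab, hQe, haD, hbD, hclean⟩ :=
          ear_exists hC' ⟨e, heC, heD⟩ hne
        have hQC' : Q ⊆ C' := hQsub.trans Set.diff_subset
        have huQ : u ∉ G.VSet Q := by
          rintro ⟨q, hq, hqi⟩
          rcases cycle_two_links hC' heC hfC hef hue huf q (hQC' hq) hqi with rfl | rfl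
          · exact (hQsub hq).2 heD
          · exact (hQsub hq).2 hfD
        have haQ : a ∈ G.VSet Q := (by rw [hQe]; exact Or.inl rfl : a ∈ G.Ends Q).1
        have hbQ : b ∈ G.VSet Q := (by rw [hQe]; exact Or.inr rfl : b ∈ G.Ends Q).1
        have hau : a ≠ u := by rintro rfl; exact huQ haQ
        have hbu : b ≠ u := by rintro rfl; exact huQ hbQ
        obtain ⟨R₁, R₂, hRu, hRd, hR₁p, hR₂p, hR₁e, hR₂e, heR₁⟩ :
            ∃ R₁ R₂, R₁ ∪ R₂ = D ∧ Disjoint R₁ R₂ ∧ G.IsPath R₁ ∧ G.IsPath R₂ ∧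
              G.Ends R₁ = {a, b} ∧ G.Ends R₂ = {a, b} ∧ e ∈ R₁ := by
          obtain ⟨R₁, R₂, h1, h2, h3, h4, h5, h6⟩ := cycle_split hD haD hbD hab
          have he12 : e ∈ R₁ ∪ R₂ := by rw [h1]; exact heD
          rcases he12 with h | h
          · exact ⟨R₁, R₂, h1, h2, h3, h4, h5, h6, h⟩
          · exact ⟨R₂, R₁, by rw [Set.union_comm]; exact h1, h2.symm, h4, h3, h6, h5, h⟩
        have hR₁D : R₁ ⊆ D := by rw [← hRu]; exact Set.subset_union_left
        have hR₂D : R₂ ⊆ D := by rw [← hRu]; exact Set.subset_union_right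
        have huR₁V : u ∈ G.VSet R₁ := ⟨e, heR₁, hue⟩
        have huE : u ∉ G.Ends R₁ := by
          intro h
          rw [hR₁e] at h
          rcases h with h | h
          · exact hau h.symm
          · exact hbu h.symm
        have hdR₁ : G.deg R₁ u = 2 := path_interior_deg hR₁p huR₁V huE
        have hdD : G.deg D u = 2 := hD.2.2.2 u ⟨e, heD, hue⟩
        have hfR₁ : f ∈ R₁ :=
          mem_of_deg_eq hR₁D hD.1 (le_of_eq (hdD.trans hdR₁.symm)) hfD huf
        have huR₂ : u ∉ G.VSet R₂ := by
          rintro ⟨t, ht, hti⟩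
          rcases cycle_two_links hD heD hfD hef hue huf t (hR₂D ht) hti with rfl | rfl
          · exact Set.disjoint_left.1 hRd heR₁ ht
          · exact Set.disjoint_left.1 hRd hfR₁ ht
        have hVQR₂ : G.VSet Q ∩ G.VSet R₂ ⊆ {a, b} := by
          rintro z ⟨h1, h2⟩
          by_cases hza : z = a
          · exact Or.inl hza
          by_cases hzb : z = b
          · exact Or.inr hzb
          exact absurd (VSet_mono hR₂D h2) (hclean z h1 hza hzb)
        have hVQR₁ : G.VSet Q ∩ G.VSet R₁ ⊆ {a, b} := by
          rintro z ⟨h1, h2⟩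
          by_cases hza : z = a
          · exact Or.inl hza
          by_cases hzb : z = b
          · exact Or.inr hzb
          exact absurd (VSet_mono hR₁D h2) (hclean z h1 hza hzb)
        have hdisjQR₂ : Disjoint Q R₂ := by
          rw [Set.disjoint_left]
          intro x hx hx2
          exact (hQsub hx).2 (hR₂D hx2)
        have hdisjQR₁ : Disjoint Q R₁ := by
          rw [Set.disjoint_left]
          intro x hx hx2
          exact (hQsub hx).2 (hR₁D hx2)
        have hZ : G.IsCycle (Q ∪ R₂) := glue_paths hQpath hR₂p hQe hR₂e hab hdisjQR₂ hVQR₂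
        have hD' : G.IsCycle (Q ∪ R₁) := glue_paths hQpath hR₁p hQe hR₁e hab hdisjQR₁ hVQR₁
        have huZ : u ∉ G.VSet (Q ∪ R₂) := by
          rw [VSet_union]
          rintro (h | h)
          · exact huQ h
          · exact huR₂ h
        have hZbal : (Q ∪ R₂) ∈ Ω.Balanced := hbal _ hZ huZ
        have hQD : ∀ x, x ∈ Q → x ∉ D := fun x hx => (hQsub hx).2
        have hsymm1 : Q ∪ R₁ = symmDiff D (Q ∪ R₂) := by
          ext x
          simp only [Set.mem_union, Set.mem_symmDiff]
          have h1 := hQD x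
          have h2 : x ∈ D ↔ x ∈ R₁ ∨ x ∈ R₂ := by rw [← hRu, Set.mem_union]
          have h3 : x ∈ R₁ → x ∉ R₂ := fun h => Set.disjoint_left.1 hRd h
          constructor
          · rintro (hx | hx)
            · exact Or.inr ⟨Or.inl hx, h1 hx⟩
            · refine Or.inl ⟨hR₁D hx, ?_⟩
              rintro (hq | hr)
              · exact h1 hq (hR₁D hx)
              · exact h3 hx hr
          · rintro (⟨hxD, hxn⟩ | ⟨hx, hxD⟩)
            · rcases h2.1 hxD with h | h
              · exact Or.inr h
              · exact absurd (Or.inr h) hxn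
            · rcases hx with h | h
              · exact Or.inl h
              · exact absurd (hR₂D h) hxD
        have hsymm2 : D = symmDiff (Q ∪ R₁) (Q ∪ R₂) := by
          ext x
          simp only [Set.mem_union, Set.mem_symmDiff]
          have h1 := hQD x
          have h2 : x ∈ D ↔ x ∈ R₁ ∨ x ∈ R₂ := by rw [← hRu, Set.mem_union]
          have h3 : x ∈ R₁ → x ∉ R₂ := fun h => Set.disjoint_left.1 hRd h
          constructor
          · intro hxD
            rcases h2.1 hxD with h | h
            · refine Or.inl ⟨Or.inr h, ?_⟩
              rintro (hq | hr)
              · exact h1 hq hxD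
              · exact h3 h hr
            · refine Or.inr ⟨Or.inr h, ?_⟩
              rintro (hq | hr)
              · exact h1 hq hxD
              · exact h3 hr h
          · rintro (⟨h, hn⟩ | ⟨h, hn⟩)
            · rcases h with hq | hr
              · exact absurd (Or.inl hq) hn
              · exact hR₁D hr
            · rcases h with hq | hr
              · exact absurd (Or.inl hq) hn
              · exact hR₂D hr
        have dir1 : D ∈ Ω.Balanced → (Q ∪ R₁) ∈ Ω.Balanced := fun h =>
          hθ.2 D (Q ∪ R₂) (Q ∪ R₁) hD hZ hD' hsymm1 h hZbal
        have dir2 : (Q ∪ R₁) ∈ Ω.Balanced → D ∈ Ω.Balanced := fun h =>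
          hθ.2 (Q ∪ R₁) (Q ∪ R₂) D hD' hZ hD hsymm2 h hZbal
        have hmex : ∃ m ∈ R₂, m ∉ C' := by
          by_contra h
          push_neg at h
          have hZC : Q ∪ R₂ ⊆ C' := Set.union_subset hQC' h
          have heqZ := cycle_subset_cycle_eq hZ hC' hZC
          have : e ∈ Q ∪ R₂ := by rw [heqZ]; exact heC
          rcases this with h' | h'
          · exact (hQsub h').2 heD
          · exact Set.disjoint_left.1 hRd heR₁ h'
        obtain ⟨m, hmR₂, hmC'⟩ := hmex
        have hsubset : (Q ∪ R₁) ∪ C' ⊆ D ∪ C' := by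
          rintro x ((hx | hx) | hx)
          · exact Or.inr (hQC' hx)
          · exact Or.inl (hR₁D hx)
          · exact Or.inr hx
        have hmnot : m ∉ (Q ∪ R₁) ∪ C' := by
          rintro ((h | h) | h)
          · exact (hQsub h).2 (hR₂D hmR₂)
          · exact Set.disjoint_left.1 hRd h hmR₂
          · exact hmC' h
        have hmD : m ∈ D ∪ C' := Or.inl (hR₂D hmR₂)
        have hcard' : ((Q ∪ R₁) ∪ C').ncard < (D ∪ C').ncard := by
          refine Set.ncard_lt_ncard ⟨hsubset, fun hss => hmnot (hss hmD)⟩ (hD.1.union hC'.1)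
        have hiter := ih (Q ∪ R₁) C' hD' hC' (Or.inr heR₁) (Or.inr hfR₁) heC hfC (by omega)
        exact ⟨fun h => hiter.1 (dir1 h), fun h => dir2 (hiter.2 h)⟩

theorem stmt_5 {V E : Type*} (Ω : BiasedGraph V E) (hθ : Ω.ThetaProperty) (u : V)
    (hbal : ∀ C : Set E, Ω.toMultiGraph.IsCycle C → u ∉ Ω.toMultiGraph.VSet C → C ∈ Ω.Balanced)
    (e f : E) (he : Ω.toMultiGraph.IsLink e) (hf : Ω.toMultiGraph.IsLink f)
    (hue : Ω.toMultiGraph.Inc u e) (huf : Ω.toMultiGraph.Inc u f) (hef : e ≠ f) :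
    (∀ C : Set E, Ω.toMultiGraph.IsCycle C → e ∈ C → f ∈ C → C ∈ Ω.Balanced) ∨
    (∀ C : Set E, Ω.toMultiGraph.IsCycle C → e ∈ C → f ∈ C → C ∉ Ω.Balanced) := by
  classical
  have key : ∀ C₁ C₂ : Set E, Ω.toMultiGraph.IsCycle C₁ → Ω.toMultiGraph.IsCycle C₂ →
      e ∈ C₁ → f ∈ C₁ → e ∈ C₂ → f ∈ C₂ → (C₁ ∈ Ω.Balanced ↔ C₂ ∈ Ω.Balanced) :=
    fun C₁ C₂ h1 h2 h3 h4 h5 h6 =>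
      key_balance Ω hθ u hbal e f hue huf hef (C₁ ∪ C₂).ncard C₁ C₂ h1 h2 h3 h4 h5 h6 le_rfl
  by_cases hex : ∃ C : Set E, Ω.toMultiGraph.IsCycle C ∧ e ∈ C ∧ f ∈ C ∧ C ∉ Ω.Balanced
  · right
    intro C hC heC hfC hCB
    obtain ⟨C₀, h1, h2, h3, h4⟩ := hex
    exact h4 ((key C C₀ hC h1 heC hfC h2 h3).1 hCB)
  · left
    intro C hC heC hfC
    by_contra h
    exact hex ⟨C, hC, heC, hfC, h⟩
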